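/- arXiv:1502.03286 — 6 statements merged into one kernel-verified Lean document; each statement's English description precedes it below -/
import Mathlib

section
/- Recursive formula for the information complexity: for s ≥ 2 and ε ∈ (0,1) with x(ε) = (log ε^{-2})/(log ω^{-1}), one has n(ε, APP_s) = Σ_{k=0}^{⌈(x(ε)/a_s)^{1/b_s}⌉ - 1} m_k · n(ε·ω^{-a_s k^{b_s}/2}, APP_{s-1}). -/
open scoped ENNReal

/-- `x(ε) = log ε⁻² / log ω⁻¹`. -/
noncomputable def X (ω ε : ℝ) : ℝ := Real.log (ε⁻¹ ^ 2) / Real.log ω⁻¹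

open Classical in
/-- The information complexity `n(ε, APP_s)`: the weighted count
`∑_{k ∈ ℕ₀^s, ∑_j a_j k_j^{b_j} < x(ε)} m_{k_1} ⋯ m_{k_s}` (valued in `ℝ≥0∞`). -/
noncomputable def nInfo (ω : ℝ) (a b : ℕ → ℝ) (m : ℕ → ℕ) (s : ℕ) (ε : ℝ) : ℝ≥0∞ :=
  ∑' k : Fin s → ℕ,
    if (∑ j : Fin s, a j * ((k j : ℝ) ^ (b j))) < X ω ε then
      ∏ j : Fin s, (m (k j) : ℝ≥0∞) else 0

lemma Xshift (ω : ℝ) (hω : ω ∈ Set.Ioo (0:ℝ) 1) (ε : ℝ) (hε : 0 < ε) (c : ℝ) :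
    X ω (ε * ω ^ (-c / 2)) = X ω ε - c := by
  obtain ⟨hω0, hω1⟩ := hω
  have hlog : Real.log ω⁻¹ ≠ 0 :=
    (Real.log_pos (by rw [one_lt_inv_iff₀]; exact ⟨hω0, hω1⟩)).ne'
  have hlogω : Real.log ω⁻¹ = -Real.log ω := Real.log_inv ω
  have hεne : ε ≠ 0 := hε.ne'
  have hpow : (ω : ℝ) ^ (-c / 2) ≠ 0 := (Real.rpow_pos_of_pos hω0 _).ne'
  unfold X
  rw [mul_inv, Real.log_pow, Real.log_pow,
    Real.log_mul (inv_ne_zero hεne) (inv_ne_zero hpow),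
    Real.log_inv, Real.log_inv, Real.log_rpow hω0, hlogω]
  have hne : (-Real.log ω) ≠ 0 := by simpa [hlogω] using hlog
  rw [eq_sub_iff_add_eq, div_add' _ _ _ hne, div_eq_div_iff hne hne]
  ring

/-- Recursive formula: for `s ≥ 2` and `ε ∈ (0,1)`,
`n(ε, APP_s) = ∑_{k=0}^{⌈(x(ε)/a_s)^{1/b_s}⌉ - 1} m_k · n(ε ω^{-a_s k^{b_s}/2}, APP_{s-1})`. -/
theorem stmt7 (ω : ℝ) (hω : ω ∈ Set.Ioo (0:ℝ) 1)
    (a b : ℕ → ℝ) (ha : ∀ j, 0 < a j) (hamono : Monotone a) (hb : ∀ j, 0 < b j)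
    (m : ℕ → ℕ) (hm : ∀ k, 1 ≤ m k) (hmbd : ∃ M, ∀ k, m k ≤ M)
    (s : ℕ) (hs : 2 ≤ s) (ε : ℝ) (hε : ε ∈ Set.Ioo (0:ℝ) 1) :
    nInfo ω a b m s ε
      = ∑ k ∈ Finset.range ⌈(X ω ε / a (s - 1)) ^ ((1 : ℝ) / b (s - 1))⌉₊,
          (m k : ℝ≥0∞) *
            nInfo ω a b m (s - 1) (ε * ω ^ (-(a (s - 1) * (k : ℝ) ^ (b (s - 1))) / 2)) := by
  classical
  obtain ⟨hε0, hε1⟩ := hε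
  have hω0 := hω.1
  have hω1 := hω.2
  obtain ⟨n, rfl⟩ : ∃ n, s = n + 1 := ⟨s - 1, by omega⟩
  simp only [Nat.add_sub_cancel]
  have hX0 : 0 < X ω ε := by
    apply div_pos
    · apply Real.log_pos
      have h1 : 1 < ε⁻¹ := by rw [one_lt_inv_iff₀]; exact ⟨hε0, hε1⟩
      nlinarith
    · exact Real.log_pos (by rw [one_lt_inv_iff₀]; exact ⟨hω0, hω1⟩)
  have step1 : nInfo ω a b m (n+1) ε
      = ∑' k : ℕ, (m k : ℝ≥0∞) * nInfo ω a b m n (ε * ω ^ (-(a n * (k:ℝ) ^ (b n)) / 2)) := by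
    simp only [nInfo]
    rw [← Equiv.tsum_eq (Fin.snocEquiv (fun _ => ℕ)), ENNReal.tsum_prod']
    refine tsum_congr fun k => ?_
    rw [Xshift ω ⟨hω0, hω1⟩ ε hε0, ← ENNReal.tsum_mul_left]
    refine tsum_congr fun v => ?_
    have hcond : (∑ j : Fin (n+1), a j * (((Fin.snocEquiv (fun _ => ℕ) (k, v)) j : ℝ) ^ (b j)))
        = (∑ j : Fin n, a j * ((v j : ℝ) ^ (b j))) + a n * (k:ℝ) ^ (b n) := by
      simp [Fin.snocEquiv, Fin.sum_univ_castSucc]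
    have hprod : (∏ j : Fin (n+1), (m ((Fin.snocEquiv (fun _ => ℕ) (k, v)) j) : ℝ≥0∞))
        = (∏ j : Fin n, (m (v j) : ℝ≥0∞)) * (m k : ℝ≥0∞) := by
      simp [Fin.snocEquiv, Fin.prod_univ_castSucc]
    rw [hcond, hprod]
    by_cases h : (∑ j : Fin n, a j * ((v j:ℝ) ^ (b j))) + a n * (k:ℝ) ^ (b n) < X ω ε
    · rw [if_pos h, if_pos (by linarith), mul_comm]
    · rw [if_neg h, if_neg (by intro hc; exact h (by linarith)), mul_zero]
  rw [step1]
  refine tsum_eq_sum ?_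
  intro k hk
  have hNk : ⌈(X ω ε / a n) ^ ((1:ℝ) / b n)⌉₊ ≤ k :=
    le_of_not_gt fun h => hk (Finset.mem_range.mpr h)
  have hkN : ((X ω ε / a n) ^ ((1:ℝ) / b n)) ≤ (k:ℝ) := Nat.ceil_le.mp hNk
  have hXa : (0:ℝ) ≤ X ω ε / a n := div_nonneg hX0.le (ha n).le
  have hXc : X ω ε ≤ a n * (k:ℝ) ^ (b n) := by
    have h2 := Real.rpow_le_rpow (Real.rpow_nonneg hXa _) hkN (hb n).le
    rw [← Real.rpow_mul hXa, one_div_mul_cancel (hb n).ne', Real.rpow_one] at h2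
    rw [mul_comm, ← div_le_iff₀ (ha n)]
    exact h2
  have hzero : nInfo ω a b m n (ε * ω ^ (-(a n * (k:ℝ) ^ (b n)) / 2)) = 0 := by
    rw [nInfo, Xshift ω ⟨hω0, hω1⟩ ε hε0]
    refine ENNReal.tsum_eq_zero.mpr fun v => if_neg (not_lt.mpr ?_)
    have hs0 : (0:ℝ) ≤ ∑ j : Fin n, a j * ((v j:ℝ) ^ (b j)) :=
      Finset.sum_nonneg fun j _ =>
        mul_nonneg (ha _).le (Real.rpow_nonneg (Nat.cast_nonneg _) _)
    linarith
  rw [hzero, mul_zero]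
end

section
/- Upper bound on information complexity: for ε∈(0,1) with x(ε) > a_1, n(ε, APP_s) ≤ m_0^s · Π_{j=1}^{min(s, j(ε))} (1 + (m_max/m_0)(⌈(x(ε)/a_j)^{1/b_j}⌉ - 1)), where j(ε) = sup{ j ∈ ℕ : x(ε) > a_j } and m_max = max_{k≥1} m_k. -/
open scoped ENNReal

/-- `min(s, j(ε))` where `j(ε) = sup{j : x(ε) > a_j}`; since `a` is nondecreasing,
`j(ε)` equals the (extended) number of indices `j` with `a_j < x(ε)`. -/
noncomputable def jMin (ω : ℝ) (a : ℕ → ℝ) (s : ℕ) (ε : ℝ) : ℕ :=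
  ((min (s : ℕ∞) (Set.encard {j : ℕ | a j < X ω ε}))).toNat

lemma tsum_pi_prod : ∀ {s : ℕ} (g : Fin s → ℕ → ℝ≥0∞),
    ∑' k : Fin s → ℕ, ∏ j, g j (k j) = ∏ j, ∑' n, g j n := by
  intro s
  induction s with
  | zero => intro g; simp [tsum_fintype]
  | succ n ih =>
    intro g
    rw [← (Fin.consEquiv fun _ : Fin (n+1) => ℕ).tsum_eq
        (fun k : Fin (n+1) → ℕ => ∏ j, g j (k j))]
    have : ∀ p : ℕ × (Fin n → ℕ),
        (∏ j, g j ((Fin.consEquiv fun _ : Fin (n+1) => ℕ) p j))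
          = g 0 p.1 * ∏ j : Fin n, g j.succ (p.2 j) := by
      intro p
      rw [Fin.prod_univ_succ]
      simp [Fin.consEquiv]
    simp only [this]
    rw [ENNReal.tsum_prod']
    simp only [ENNReal.tsum_mul_left, ENNReal.tsum_mul_right]
    rw [ih (fun j => g j.succ), Fin.prod_univ_succ]


/-- Upper bound: for `ε ∈ (0,1)` with `x(ε) > a_1`,
`n(ε,APP_s) ≤ m_0^s ∏_{j=1}^{min(s,j(ε))} (1 + (m_max/m_0)(⌈(x(ε)/a_j)^{1/b_j}⌉ - 1))`. -/
theorem stmt10 (ω : ℝ) (hω : ω ∈ Set.Ioo (0:ℝ) 1)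
    (a b : ℕ → ℝ) (ha : ∀ j, 0 < a j) (hamono : Monotone a) (hb : ∀ j, 0 < b j)
    (m : ℕ → ℕ) (hm : ∀ k, 1 ≤ m k)
    (mmax : ℕ) (hmmax : ∀ k, 1 ≤ k → m k ≤ mmax) (hmmax' : ∃ k, 1 ≤ k ∧ m k = mmax)
    (s : ℕ) (ε : ℝ) (hε : ε ∈ Set.Ioo (0:ℝ) 1) (hx : a 0 < X ω ε) :
    nInfo ω a b m s ε ≤
      (m 0 : ℝ≥0∞) ^ s *
        ∏ j ∈ Finset.range (jMin ω a s ε),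
          (1 + (mmax : ℝ≥0∞) / (m 0 : ℝ≥0∞) *
            ((⌈(X ω ε / a j) ^ ((1 : ℝ) / b j)⌉₊ : ℝ≥0∞) - 1)) := by
  classical
  set x := X ω ε with hxdef
  have hx0 : (0:ℝ) < x := (ha 0).trans hx
  set N : ℕ → ℕ := fun j => ⌈(x / a j) ^ ((1:ℝ) / b j)⌉₊ with hN
  set g : ℕ → ℕ → ℝ≥0∞ :=
    fun j k => if a j * ((k:ℝ) ^ (b j)) < x then (m k : ℝ≥0∞) else 0 with hg
  set S : ℕ → ℝ≥0∞ :=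
    fun j => if a j < x then (m 0 : ℝ≥0∞) + (mmax : ℝ≥0∞) * ((N j - 1 : ℕ) : ℝ≥0∞)
      else (m 0 : ℝ≥0∞) with hS
  -- coordinatewise sum bound
  have hg_le : ∀ j, (∑' k, g j k) ≤ S j := by
    intro j
    by_cases hj : a j < x
    · have hx_div : (0:ℝ) < x / a j := div_pos hx0 (ha j)
      have hNpos : 0 < N j := by
        rw [hN]
        exact Nat.ceil_pos.mpr (Real.rpow_pos_of_pos hx_div _)
      have hsupp : ∀ k ∉ Finset.range (N j), g j k = 0 := by
        intro k hk
        rw [Finset.mem_range, not_lt] at hk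
        rw [hg]
        simp only
        rw [if_neg]
        intro hlt
        have h1 : ((k:ℝ)) ^ (b j) < x / a j := by
          rw [lt_div_iff₀ (ha j)]
          linarith [mul_comm (a j) ((k:ℝ) ^ (b j))]
        have h2 : ((k:ℝ) ^ (b j)) ^ ((1:ℝ) / b j) < (x / a j) ^ ((1:ℝ) / b j) :=
          Real.rpow_lt_rpow (Real.rpow_nonneg (Nat.cast_nonneg k) _) h1
            (one_div_pos.mpr (hb j))
        have h3 : ((k:ℝ) ^ (b j)) ^ ((1:ℝ) / b j) = (k:ℝ) := by
          rw [← Real.rpow_mul (Nat.cast_nonneg k), mul_one_div,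
            div_self (ne_of_gt (hb j)), Real.rpow_one]
        rw [h3] at h2
        have : k < N j := Nat.lt_ceil.mpr h2
        omega
      rw [tsum_eq_sum hsupp]
      have hNsucc : N j = (N j - 1) + 1 := (Nat.succ_pred_eq_of_pos hNpos).symm
      rw [hNsucc, Finset.sum_range_succ']
      have h0 : g j 0 = (m 0 : ℝ≥0∞) := by
        rw [hg]; simp only [Nat.cast_zero]
        rw [Real.zero_rpow (ne_of_gt (hb j)), mul_zero, if_pos hx0]
      have hrest : (∑ i ∈ Finset.range (N j - 1), g j (i + 1))
          ≤ (mmax : ℝ≥0∞) * ((N j - 1 : ℕ) : ℝ≥0∞) := by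
        calc (∑ i ∈ Finset.range (N j - 1), g j (i + 1))
            ≤ ∑ _i ∈ Finset.range (N j - 1), (mmax : ℝ≥0∞) := by
              refine Finset.sum_le_sum fun i _ => ?_
              rw [hg]; simp only
              split_ifs with h
              · exact_mod_cast hmmax (i+1) (Nat.le_add_left 1 i)
              · exact zero_le
          _ = (mmax : ℝ≥0∞) * ((N j - 1 : ℕ) : ℝ≥0∞) := by
              rw [Finset.sum_const, Finset.card_range, nsmul_eq_mul, mul_comm]
      rw [hS]; simp only [if_pos hj]
      rw [h0]
      calc (∑ i ∈ Finset.range (N j - 1), g j (i + 1)) + (m 0 : ℝ≥0∞)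
          ≤ (mmax : ℝ≥0∞) * ((N j - 1 : ℕ) : ℝ≥0∞) + (m 0 : ℝ≥0∞) :=
            add_le_add_left hrest _
        _ = (m 0 : ℝ≥0∞) + (mmax : ℝ≥0∞) * ((N j - 1 : ℕ) : ℝ≥0∞) := add_comm _ _
    · have hsupp : ∀ k ∉ ({0} : Finset ℕ), g j k = 0 := by
        intro k hk
        rw [Finset.mem_singleton] at hk
        have hk1 : 1 ≤ k := Nat.one_le_iff_ne_zero.mpr hk
        rw [hg]; simp only
        rw [if_neg]
        push_neg at hj ⊢
        have h1k : (1:ℝ) ≤ (k:ℝ) ^ (b j) := by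
          calc (1:ℝ) = (1:ℝ) ^ (b j) := (Real.one_rpow _).symm
            _ ≤ (k:ℝ) ^ (b j) :=
              Real.rpow_le_rpow zero_le_one (by exact_mod_cast hk1) (le_of_lt (hb j))
        calc x ≤ a j := hj
          _ = a j * 1 := (mul_one _).symm
          _ ≤ a j * ((k:ℝ) ^ (b j)) :=
              mul_le_mul_of_nonneg_left h1k (le_of_lt (ha j))
      rw [tsum_eq_sum hsupp, Finset.sum_singleton]
      rw [hS]; simp only [if_neg hj]
      rw [hg]; simp only
      split_ifs
      · exact le_refl _
      · exact zero_le
  -- step 1 : nInfo ≤ product form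
  have h1 : nInfo ω a b m s ε ≤ ∑' k : Fin s → ℕ, ∏ j : Fin s, g (j : ℕ) (k j) := by
    unfold nInfo
    refine Summable.tsum_le_tsum (fun k => ?_) ENNReal.summable ENNReal.summable
    split_ifs with hcond
    · refine le_of_eq (Finset.prod_congr rfl fun j _ => ?_)
      rw [hg]; simp only
      rw [if_pos]
      calc a (j:ℕ) * ((k j : ℝ) ^ (b (j:ℕ)))
          ≤ ∑ i : Fin s, a (i:ℕ) * ((k i : ℝ) ^ (b (i:ℕ))) :=
            Finset.single_le_sum
              (f := fun i : Fin s => a (i:ℕ) * ((k i : ℝ) ^ (b (i:ℕ))))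
              (fun i _ => mul_nonneg (le_of_lt (ha i))
                (Real.rpow_nonneg (Nat.cast_nonneg _) _))
              (Finset.mem_univ j)
        _ < x := hcond
    · exact zero_le
  have h2 := tsum_pi_prod (fun j : Fin s => g (j : ℕ))
  rw [h2] at h1
  have h3 : (∏ j : Fin s, ∑' k, g (j:ℕ) k) ≤ ∏ j : Fin s, S (j : ℕ) :=
    Finset.prod_le_prod' fun j _ => hg_le j
  -- analyze jMin
  set T : Set ℕ := {j | a j < x} with hT
  have hdown : ∀ {i j : ℕ}, i ≤ j → j ∈ T → i ∈ T :=
    fun hij hj => lt_of_le_of_lt (hamono hij) hj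
  set J : ℕ := jMin ω a s ε with hJdef
  have hkey : J ≤ s ∧ (∀ j < J, a j < x) ∧ (∀ j, J ≤ j → j < s → ¬ a j < x) := by
    by_cases hfin : T.Finite
    · set c : ℕ := hfin.toFinset.card with hc
      have henc : T.encard = (c : ℕ∞) := hfin.encard_eq_coe_toFinset_card
      have hJ : J = min s c := by
        rw [hJdef]; unfold jMin
        rw [show {j : ℕ | a j < X ω ε} = T from rfl, henc]
        rcases le_total s c with h | h
        · rw [min_eq_left (by exact_mod_cast h), min_eq_left h, ENat.toNat_coe]
        · rw [min_eq_right (by exact_mod_cast h), min_eq_right h, ENat.toNat_coe]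
      refine ⟨hJ ▸ min_le_left s c, ?_, ?_⟩
      · intro j hj
        rw [hJ] at hj
        have hjc : j < c := lt_of_lt_of_le hj (min_le_right _ _)
        by_contra hnot
        have hsub : hfin.toFinset ⊆ Finset.range j := by
          intro k hk
          rw [Set.Finite.mem_toFinset] at hk
          rw [Finset.mem_range]
          by_contra hkj
          push_neg at hkj
          exact hnot (hdown hkj hk)
        have := Finset.card_le_card hsub
        rw [Finset.card_range] at this
        omega
      · intro j hj1 hj2 hnot
        rw [hJ] at hj1
        have hcj : c ≤ j := by
          rcases le_or_gt c s with h | h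
          · rw [min_eq_right h] at hj1; exact hj1
          · rw [min_eq_left (le_of_lt h)] at hj1; omega
        have hsub : Finset.range (j+1) ⊆ hfin.toFinset := by
          intro k hk
          rw [Finset.mem_range] at hk
          rw [Set.Finite.mem_toFinset]
          exact hdown (Nat.lt_succ_iff.mp hk) hnot
        have := Finset.card_le_card hsub
        rw [Finset.card_range] at this
        omega
    · have hinf : T.Infinite := hfin
      have henc : T.encard = ⊤ := hinf.encard_eq
      have hJ : J = s := by
        rw [hJdef]; unfold jMin
        rw [show {j : ℕ | a j < X ω ε} = T from rfl, henc,
          min_eq_left le_top, ENat.toNat_coe]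
      have hall : ∀ j, a j < x := by
        intro j
        by_contra hnot
        refine hfin (Set.Finite.subset (Set.finite_Iio j) ?_)
        intro k hk
        rw [Set.mem_Iio]
        by_contra hkj
        push_neg at hkj
        exact hnot (hdown hkj hk)
      exact ⟨le_of_eq hJ, fun j _ => hall j, fun j hj1 hj2 => by omega⟩
  obtain ⟨hJs, hJ1, hJ2⟩ := hkey
  -- final algebra
  have hm0ne : (m 0 : ℝ≥0∞) ≠ 0 :=
    Nat.cast_ne_zero.mpr (Nat.one_le_iff_ne_zero.mp (hm 0))
  have hm0top : (m 0 : ℝ≥0∞) ≠ ⊤ := ENNReal.natCast_ne_top _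
  set t : ℕ → ℝ≥0∞ :=
    fun j => 1 + (mmax : ℝ≥0∞) / (m 0 : ℝ≥0∞) * (((N j : ℝ≥0∞)) - 1) with ht
  have hSt : ∀ j < J, S j = (m 0 : ℝ≥0∞) * t j := by
    intro j hj
    rw [hS, ht]; simp only [if_pos (hJ1 j hj)]
    rw [mul_add, mul_one, ← mul_assoc, ENNReal.mul_div_cancel hm0ne hm0top,
      ENNReal.natCast_sub, Nat.cast_one]
  have hprod : (∏ j : Fin s, S (j:ℕ)) = ∏ j ∈ Finset.range s, S j :=
    Fin.prod_univ_eq_prod_range S s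
  have hsplit : (∏ j ∈ Finset.range s, S j)
      = (∏ j ∈ Finset.range J, S j) * ∏ j ∈ Finset.Ico J s, S j :=
    (Finset.prod_range_mul_prod_Ico S hJs).symm
  have hIco : (∏ j ∈ Finset.Ico J s, S j) = (m 0 : ℝ≥0∞) ^ (s - J) := by
    have heq : ∀ j ∈ Finset.Ico J s, S j = (m 0 : ℝ≥0∞) := by
      intro j hj
      rw [Finset.mem_Ico] at hj
      rw [hS]; simp only [if_neg (hJ2 j hj.1 hj.2)]
    rw [Finset.prod_congr rfl heq, Finset.prod_const, Nat.card_Ico]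
  have hrange : (∏ j ∈ Finset.range J, S j)
      = (m 0:ℝ≥0∞)^J * ∏ j ∈ Finset.range J, t j := by
    rw [Finset.prod_congr rfl (fun j hj => hSt j (Finset.mem_range.mp hj)),
      Finset.prod_mul_distrib, Finset.prod_const, Finset.card_range]
  have hfinal : (∏ j : Fin s, S (j:ℕ))
      = (m 0 : ℝ≥0∞) ^ s * ∏ j ∈ Finset.range J, t j := by
    rw [hprod, hsplit, hIco, hrange, mul_right_comm, ← pow_add]
    congr 2
    omega
  calc nInfo ω a b m s ε ≤ ∏ j : Fin s, ∑' k, g (j:ℕ) k := h1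
    _ ≤ ∏ j : Fin s, S (j:ℕ) := h3
    _ = (m 0 : ℝ≥0∞) ^ s * ∏ j ∈ Finset.range J, t j := hfinal
    _ = _ := rfl
end

section
/- Lower bound on information complexity: for ε∈(0,1) with x(ε) > a_1, n(ε, APP_s) ≥ m_0^s · Π_{j=1}^{min(s, j(ε))} (1 + (m_min/m_0)(⌈(x(ε)/(a_j s))^{1/b_j}⌉ - 1)), where j(ε) = sup{j∈ℕ : x(ε)>a_j} and m_min = min_{k≥1} m_k. -/
open scoped ENNReal

section Aux

variable (x : ℝ) (a b : ℕ → ℝ) (m : ℕ → ℕ) (mmin : ℕ) (s J : ℕ)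

/-- The candidate index box. -/
noncomputable def auxS (x : ℝ) (a b : ℕ → ℝ) (s J : ℕ) : Fin s → Finset ℕ :=
  fun j => if (j : ℕ) < J then
    Finset.range (max 1 (⌈(x / (a (j : ℕ) * (s : ℝ))) ^ ((1 : ℝ) / b (j : ℕ))⌉₊)) else {0}

/-- The lower-bound weights. -/
noncomputable def auxw (m : ℕ → ℕ) (mmin : ℕ) : ℕ → ℝ≥0∞ :=
  fun v => if v = 0 then (m 0 : ℝ≥0∞) else (mmin : ℝ≥0∞)

theorem aux_lb (hx0 : 0 < x) (ha : ∀ j, 0 < a j) (hb : ∀ j, 0 < b j)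
    (hm : ∀ k, 1 ≤ m k) (hmmin : ∀ k, 1 ≤ k → mmin ≤ m k) (hJs : J ≤ s) :
    (m 0 : ℝ≥0∞) ^ s *
        ∏ j ∈ Finset.range J,
          (1 + (mmin : ℝ≥0∞) / (m 0 : ℝ≥0∞) *
            ((⌈(x / (a j * (s : ℝ))) ^ ((1 : ℝ) / b j)⌉₊ : ℝ≥0∞) - 1))
      ≤ ∑' k : Fin s → ℕ,
          if (∑ j : Fin s, a j * ((k j : ℝ) ^ (b j))) < x then
            ∏ j : Fin s, (m (k j) : ℝ≥0∞) else 0 := by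

  classical
  set N : ℕ → ℕ := fun j => ⌈(x / (a j * (s : ℝ))) ^ ((1 : ℝ) / b j)⌉₊ with hN
  have hm0 : (m 0 : ℝ≥0∞) ≠ 0 := by
    simp only [ne_eq, Nat.cast_eq_zero]
    have := hm 0; omega
  have hm0t : (m 0 : ℝ≥0∞) ≠ ⊤ := ENNReal.natCast_ne_top _
  -- the box
  set S : Fin s → Finset ℕ := auxS x a b s J with hS
  set w : ℕ → ℝ≥0∞ := auxw m mmin with hw
  -- Step 1: every k in the box satisfies the constraint
  have hcons : ∀ k : Fin s → ℕ, k ∈ Fintype.piFinset S →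
      (∑ j : Fin s, a j * ((k j : ℝ) ^ (b j))) < x := by
    intro k hk
    rcases Nat.eq_zero_or_pos s with hs | hs
    · subst hs
      simpa using hx0
    · have hsR : (0:ℝ) < (s:ℝ) := by exact_mod_cast hs
      have hterm : ∀ j : Fin s, a j * ((k j : ℝ) ^ (b j)) < x / s := by
        intro j
        have hxs : (0:ℝ) < x / s := div_pos hx0 hsR
        rcases Nat.eq_zero_or_pos (k j) with h0 | h1
        · rw [h0]
          simpa [Real.zero_rpow (ne_of_gt (hb (j:ℕ)))] using hxs
        · have hkS := (Fintype.mem_piFinset.mp hk) j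
          by_cases hj : (j:ℕ) < J
          · simp only [hS, auxS, if_pos hj] at hkS
            have hNk : k j < max 1 (N (j:ℕ)) := Finset.mem_range.mp hkS
            have hkN : k j < N (j:ℕ) := by
              rcases le_or_gt (N (j:ℕ)) 1 with h | h
              · rw [max_eq_left h] at hNk; omega
              · rwa [max_eq_right (le_of_lt h)] at hNk
            have hy : ((k j : ℕ) : ℝ) < (x / (a (j:ℕ) * s)) ^ ((1:ℝ) / b (j:ℕ)) :=
              Nat.lt_ceil.mp hkN
            have hbase : (0:ℝ) ≤ x / (a (j:ℕ) * s) :=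
              le_of_lt (div_pos hx0 (mul_pos (ha _) hsR))
            calc a (j:ℕ) * ((k j : ℝ) ^ (b (j:ℕ)))
                < a (j:ℕ) * (((x / (a (j:ℕ) * s)) ^ ((1:ℝ) / b (j:ℕ))) ^ (b (j:ℕ))) := by
                  apply mul_lt_mul_of_pos_left _ (ha _)
                  exact Real.rpow_lt_rpow (Nat.cast_nonneg _) hy (hb _)
              _ = a (j:ℕ) * (x / (a (j:ℕ) * s)) := by
                  rw [one_div, Real.rpow_inv_rpow hbase (ne_of_gt (hb _))]
              _ = x / s := by
                  have hane : a (j:ℕ) ≠ 0 := ne_of_gt (ha _)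
                  have hsne : (s:ℝ) ≠ 0 := ne_of_gt hsR
                  field_simp
          · simp only [hS, auxS, if_neg hj, Finset.mem_singleton] at hkS
            omega
      have hne : (Finset.univ : Finset (Fin s)).Nonempty := by
        have : Nonempty (Fin s) := Fin.pos_iff_nonempty.mp hs
        exact Finset.univ_nonempty
      calc (∑ j : Fin s, a j * ((k j : ℝ) ^ (b j)))
          < ∑ _j : Fin s, x / s := Finset.sum_lt_sum_of_nonempty hne (fun j _ => hterm j)
        _ = x := by
            rw [Finset.sum_const, Finset.card_univ, Fintype.card_fin, nsmul_eq_mul]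
            field_simp
  -- Step 2: the tsum dominates the product of columns sums of weights
  have hmain : (∏ j : Fin s, ∑ v ∈ S j, w v)
      ≤ ∑' k : Fin s → ℕ,
          if (∑ j : Fin s, a j * ((k j : ℝ) ^ (b j))) < x then
            ∏ j : Fin s, (m (k j) : ℝ≥0∞) else 0 := by
    rw [Finset.prod_univ_sum]
    refine le_trans ?_ (ENNReal.sum_le_tsum (Fintype.piFinset S))
    apply Finset.sum_le_sum
    intro k hk
    rw [if_pos (hcons k hk)]
    apply Finset.prod_le_prod' (fun j _ => ?_)
    by_cases h0 : k j = 0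
    · simp [hw, auxw, h0]
    · simp only [hw, auxw, if_neg h0]
      exact_mod_cast hmmin _ (Nat.one_le_iff_ne_zero.mpr h0)
  -- Step 3: compute the column sums
  have hcol : ∀ j : Fin s, (∑ v ∈ S j, w v) =
      (if (j:ℕ) < J then (m 0 : ℝ≥0∞) + (mmin : ℝ≥0∞) * ((N (j:ℕ) : ℝ≥0∞) - 1)
       else (m 0 : ℝ≥0∞)) := by
    intro j
    by_cases hj : (j:ℕ) < J
    · simp only [hS, auxS, if_pos hj, ← hN]
      set n : ℕ := max 1 (N (j:ℕ)) with hn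
      have h0mem : 0 ∈ Finset.range n := by
        simp [hn]
      rw [← Finset.sum_erase_add _ _ h0mem]
      have herase : ∀ v ∈ (Finset.range n).erase 0, w v = (mmin : ℝ≥0∞) := by
        intro v hv
        have : v ≠ 0 := (Finset.mem_erase.mp hv).1
        simp [hw, auxw, this]
      rw [Finset.sum_congr rfl herase, Finset.sum_const,
        Finset.card_erase_of_mem h0mem, Finset.card_range, nsmul_eq_mul]
      have hsub : ((n - 1 : ℕ) : ℝ≥0∞) = (N (j:ℕ) : ℝ≥0∞) - 1 := by
        have : n - 1 = N (j:ℕ) - 1 := by omega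
        rw [this, ENNReal.natCast_sub, Nat.cast_one]
      rw [hsub]
      simp [hw, auxw]
      ring
    · simp [hS, auxS, if_neg hj, hw, auxw]
  -- Step 4: identify the left side with the product of column sums
  have hLHS : (m 0 : ℝ≥0∞) ^ s *
        ∏ j ∈ Finset.range J,
          (1 + (mmin : ℝ≥0∞) / (m 0 : ℝ≥0∞) * ((N j : ℝ≥0∞) - 1))
      = ∏ j : Fin s, ∑ v ∈ S j, w v := by
    have hprod : (∏ j : Fin s, ∑ v ∈ S j, w v)
        = ∏ j ∈ Finset.range s,
            (if j < J then (m 0 : ℝ≥0∞) + (mmin : ℝ≥0∞) * ((N j : ℝ≥0∞) - 1)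
             else (m 0 : ℝ≥0∞)) := by
      rw [← Fin.prod_univ_eq_prod_range
        (fun j => if j < J then (m 0 : ℝ≥0∞) + (mmin : ℝ≥0∞) * ((N j : ℝ≥0∞) - 1)
             else (m 0 : ℝ≥0∞)) s]
      exact Finset.prod_congr rfl (fun j _ => hcol j)
    rw [hprod]
    have hsplit : (∏ j ∈ Finset.range s,
            (if j < J then (m 0 : ℝ≥0∞) + (mmin : ℝ≥0∞) * ((N j : ℝ≥0∞) - 1)
             else (m 0 : ℝ≥0∞)))
        = (∏ j ∈ Finset.range J,
            ((m 0 : ℝ≥0∞) + (mmin : ℝ≥0∞) * ((N j : ℝ≥0∞) - 1)))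
          * (m 0 : ℝ≥0∞) ^ (s - J) := by
      rw [Finset.range_eq_Ico, ← Finset.prod_Ico_consecutive _ (Nat.zero_le J) hJs]
      congr 1
      · rw [← Finset.range_eq_Ico]
        exact Finset.prod_congr rfl (fun j hj => if_pos (Finset.mem_range.mp hj))
      · rw [Finset.prod_congr rfl
          (fun j hj => if_neg (not_lt.mpr (Finset.mem_Ico.mp hj).1)),
          Finset.prod_const, Nat.card_Ico]
    rw [hsplit]
    have hfac : ∀ j : ℕ,
        (m 0 : ℝ≥0∞) * (1 + (mmin : ℝ≥0∞) / (m 0 : ℝ≥0∞) * ((N j : ℝ≥0∞) - 1))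
          = (m 0 : ℝ≥0∞) + (mmin : ℝ≥0∞) * ((N j : ℝ≥0∞) - 1) := by
      intro j
      rw [mul_add, mul_one, ← mul_assoc,
        mul_comm ((m 0 : ℝ≥0∞)) ((mmin : ℝ≥0∞) / (m 0 : ℝ≥0∞)),
        ENNReal.div_mul_cancel hm0 hm0t]
    calc (m 0 : ℝ≥0∞) ^ s *
          ∏ j ∈ Finset.range J,
            (1 + (mmin : ℝ≥0∞) / (m 0 : ℝ≥0∞) * ((N j : ℝ≥0∞) - 1))
        = ((m 0 : ℝ≥0∞) ^ J *
            ∏ j ∈ Finset.range J,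
              (1 + (mmin : ℝ≥0∞) / (m 0 : ℝ≥0∞) * ((N j : ℝ≥0∞) - 1)))
          * (m 0 : ℝ≥0∞) ^ (s - J) := by
          rw [mul_right_comm, ← pow_add]
          congr 2
          omega
      _ = (∏ j ∈ Finset.range J,
            ((m 0 : ℝ≥0∞) * (1 + (mmin : ℝ≥0∞) / (m 0 : ℝ≥0∞) * ((N j : ℝ≥0∞) - 1))))
          * (m 0 : ℝ≥0∞) ^ (s - J) := by
          rw [Finset.prod_mul_distrib, Finset.prod_const, Finset.card_range]
      _ = (∏ j ∈ Finset.range J,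
            ((m 0 : ℝ≥0∞) + (mmin : ℝ≥0∞) * ((N j : ℝ≥0∞) - 1)))
          * (m 0 : ℝ≥0∞) ^ (s - J) := by
          rw [Finset.prod_congr rfl (fun j _ => hfac j)]
  exact le_of_eq hLHS |>.trans hmain

end Aux

/-- Lower bound: for `ε ∈ (0,1)` with `x(ε) > a_1`,
`n(ε,APP_s) ≥ m_0^s ∏_{j=1}^{min(s,j(ε))} (1 + (m_min/m_0)(⌈(x(ε)/(a_j s))^{1/b_j}⌉ - 1))`. -/
theorem stmt11 (ω : ℝ) (hω : ω ∈ Set.Ioo (0:ℝ) 1)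
    (a b : ℕ → ℝ) (ha : ∀ j, 0 < a j) (hamono : Monotone a) (hb : ∀ j, 0 < b j)
    (m : ℕ → ℕ) (hm : ∀ k, 1 ≤ m k)
    (mmin : ℕ) (hmmin : ∀ k, 1 ≤ k → mmin ≤ m k) (hmmin' : ∃ k, 1 ≤ k ∧ m k = mmin)
    (s : ℕ) (ε : ℝ) (hε : ε ∈ Set.Ioo (0:ℝ) 1) (hx : a 0 < X ω ε) :
    (m 0 : ℝ≥0∞) ^ s *
        ∏ j ∈ Finset.range (jMin ω a s ε),
          (1 + (mmin : ℝ≥0∞) / (m 0 : ℝ≥0∞) *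
            ((⌈(X ω ε / (a j * (s : ℝ))) ^ ((1 : ℝ) / b j)⌉₊ : ℝ≥0∞) - 1))
      ≤ nInfo ω a b m s ε := by
  have hx0 : 0 < X ω ε := (ha 0).trans hx
  have hJs : jMin ω a s ε ≤ s := by
    unfold jMin
    have h1 : min (s:ℕ∞) (Set.encard {j : ℕ | a j < X ω ε}) ≤ (s:ℕ∞) := min_le_left _ _
    have := ENat.toNat_le_toNat h1 (by simp)
    simpa using this
  have := aux_lb (X ω ε) a b m mmin s (jMin ω a s ε) hx0 ha hb hm hmmin hJs
  unfold nInfo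
  convert this using 2
end

section
/- Uniform exponential convergence holds if and only if Σ_{j=1}^∞ 1/b_j < ∞: there exist q∈(0,1), p>0 and for each s positive C_s, M_s with e(n, APP_s) ≤ C_s q^{(n/M_s)^p} for all n∈ℕ and all s∈ℕ, if and only if B = Σ_{j=1}^∞ b_j^{-1} < ∞; and if B < ∞ the supremum of admissible p equals 1/B. -/
open scoped ENNReal

/-- The `n`-th minimal worst-case error `e(n, APP_s)`: the infimum of error thresholds
`ε > 0` attainable with at most `n` linear functionals. -/
noncomputable def minErr (ω : ℝ) (a b : ℕ → ℝ) (m : ℕ → ℕ) (s n : ℕ) : ℝ :=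
  sInf {ε : ℝ | 0 < ε ∧ nInfo ω a b m s ε ≤ (n : ℝ≥0∞)}

section Aux

variable {ω : ℝ} {a b : ℕ → ℝ} {m : ℕ → ℕ}

open Classical in
/-- The counting function at cutoff `x`. -/
noncomputable def cnt (a b : ℕ → ℝ) (m : ℕ → ℕ) (s : ℕ) (x : ℝ) : ℝ≥0∞ :=
  ∑' k : Fin s → ℕ,
    if (∑ j : Fin s, a j * ((k j : ℝ) ^ (b j))) < x then
      ∏ j : Fin s, (m (k j) : ℝ≥0∞) else 0

lemma nInfo_eq (s : ℕ) (ε : ℝ) : nInfo ω a b m s ε = cnt a b m s (X ω ε) := rfl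

/-- X of `ω ^ (x/2)` is `x`. -/
lemma X_rpow (hω : ω ∈ Set.Ioo (0:ℝ) 1) (x : ℝ) : X ω (ω ^ (x / 2)) = x := by
  have hlog : Real.log ω < 0 := Real.log_neg hω.1 hω.2
  unfold X
  rw [Real.log_pow, Real.log_inv, Real.log_inv, Real.log_rpow hω.1]
  field_simp
  rw [mul_div_assoc, div_self (ne_of_lt hlog), mul_one, Nat.cast_ofNat, mul_comm (2:ℝ) x]

/-- For `ε > 1`, `X ω ε < 0`. -/
lemma X_neg (hω : ω ∈ Set.Ioo (0:ℝ) 1) {ε : ℝ} (hε : 1 < ε) : X ω ε < 0 := by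
  have h1 : Real.log (ε⁻¹ ^ 2) < 0 := by
    rw [Real.log_pow, Real.log_inv]
    have := Real.log_pos hε
    push_cast; nlinarith
  have h2 : 0 < Real.log ω⁻¹ := by
    rw [Real.log_inv]; nlinarith [Real.log_neg hω.1 hω.2]
  exact div_neg_of_neg_of_pos h1 h2

/-- If the cutoff is nonpositive, the count is zero. -/
lemma cnt_nonpos (ha : ∀ j, 0 < a j) (s : ℕ) {x : ℝ} (hx : x ≤ 0) :
    cnt a b m s x = 0 := by
  unfold cnt
  rw [ENNReal.tsum_eq_zero]
  intro k
  rw [if_neg]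
  intro hlt
  have h0 : 0 ≤ ∑ j : Fin s, a j * ((k j : ℝ) ^ (b j)) :=
    Finset.sum_nonneg fun j _ => mul_nonneg (ha _).le (Real.rpow_nonneg (Nat.cast_nonneg _) _)
  linarith

/-- Membership in the complexity set gives an upper bound on `minErr`. -/
lemma minErr_le (s n : ℕ) {ε : ℝ} (hε : 0 < ε) (h : cnt a b m s (X ω ε) ≤ (n : ℝ≥0∞)) :
    minErr ω a b m s n ≤ ε := by
  apply csInf_le ⟨0, fun y hy => hy.1.le⟩
  exact ⟨hε, by rw [nInfo_eq]; exact h⟩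

lemma two_mem (hω : ω ∈ Set.Ioo (0:ℝ) 1) (ha : ∀ j, 0 < a j) (s n : ℕ) :
    (2:ℝ) ∈ {ε : ℝ | 0 < ε ∧ nInfo ω a b m s ε ≤ (n : ℝ≥0∞)} := by
  refine ⟨by norm_num, ?_⟩
  rw [nInfo_eq, cnt_nonpos ha s (le_of_lt (X_neg hω (by norm_num)))]
  exact zero_le

/-- `minErr ≤ 2` always. -/
lemma minErr_le_two (hω : ω ∈ Set.Ioo (0:ℝ) 1) (ha : ∀ j, 0 < a j) (s n : ℕ) :
    minErr ω a b m s n ≤ 2 :=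
  csInf_le ⟨0, fun y hy => hy.1.le⟩ (two_mem hω ha s n)

/-- Lower bound on `minErr` from a pointwise lower bound on members of the set. -/
lemma le_minErr (hω : ω ∈ Set.Ioo (0:ℝ) 1) (ha : ∀ j, 0 < a j) (s n : ℕ) {L : ℝ}
    (h : ∀ ε : ℝ, 0 < ε → cnt a b m s (X ω ε) ≤ (n : ℝ≥0∞) → L ≤ ε) :
    L ≤ minErr ω a b m s n := by
  apply le_csInf ⟨2, two_mem hω ha s n⟩
  intro ε hε
  exact h ε hε.1 hε.2

/-- Upper bound for the count. -/
lemma cnt_le (ha : ∀ j, 0 < a j) (hamono : Monotone a)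
    (hb : ∀ j, 0 < b j) {M₀ : ℕ} (hmM : ∀ k, m k ≤ M₀) (s : ℕ) (x : ℝ) :
    cnt a b m s x ≤
      ((∏ j : Fin s, ⌈(max x 0 / a 0) ^ (b (j:ℕ))⁻¹⌉₊) * M₀ ^ s : ℕ) := by
  classical
  set c : Fin s → ℕ := fun j => ⌈(max x 0 / a 0) ^ (b (j:ℕ))⁻¹⌉₊ with hc
  set T : Finset (Fin s → ℕ) := Fintype.piFinset (fun j => Finset.range (c j)) with hT
  have hsupp : ∀ k ∉ T, (if (∑ j : Fin s, a j * ((k j : ℝ) ^ (b j))) < x then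
      ∏ j : Fin s, (m (k j) : ℝ≥0∞) else 0) = 0 := by
    intro k hk
    rw [if_neg]
    intro hlt
    apply hk
    rw [hT, Fintype.mem_piFinset]
    intro j
    rw [Finset.mem_range, hc]
    have h1 : a j * ((k j : ℝ) ^ (b j)) ≤ ∑ i : Fin s, a i * ((k i : ℝ) ^ (b i)) :=
      Finset.single_le_sum (f := fun i : Fin s => a i * ((k i : ℝ) ^ (b i)))
        (fun i _ => mul_nonneg (ha _).le (Real.rpow_nonneg (Nat.cast_nonneg _) _))
        (Finset.mem_univ j)
    have h2 : (k j : ℝ) ^ (b j) < max x 0 / a j := by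
      rw [lt_div_iff₀ (ha _)]
      calc (k j : ℝ) ^ (b j) * a j = a j * ((k j : ℝ) ^ (b j)) := mul_comm _ _
        _ < x := lt_of_le_of_lt h1 hlt
        _ ≤ max x 0 := le_max_left _ _
    have h3 : max x 0 / a (j:ℕ) ≤ max x 0 / a 0 :=
      div_le_div_of_nonneg_left (le_max_right _ _) (ha 0) (hamono (Nat.zero_le _))
    have h4 : (k j : ℝ) < (max x 0 / a 0) ^ (b (j:ℕ))⁻¹ := by
      have hkk : (k j : ℝ) = (((k j : ℝ) ^ (b (j:ℕ))) ^ (b (j:ℕ))⁻¹) :=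
        (Real.rpow_rpow_inv (Nat.cast_nonneg _) (hb (j:ℕ)).ne').symm
      rw [hkk]
      exact Real.rpow_lt_rpow (Real.rpow_nonneg (Nat.cast_nonneg _) _)
        (lt_of_lt_of_le h2 h3) (inv_pos.mpr (hb _))
    exact Nat.lt_ceil.mpr h4
  have heq : cnt a b m s x = ∑ k ∈ T, (if (∑ j : Fin s, a j * ((k j : ℝ) ^ (b j))) < x then
      ∏ j : Fin s, (m (k j) : ℝ≥0∞) else 0) := tsum_eq_sum hsupp
  rw [heq]
  calc (∑ k ∈ T, (if (∑ j : Fin s, a j * ((k j : ℝ) ^ (b j))) < x then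
      ∏ j : Fin s, (m (k j) : ℝ≥0∞) else 0)) ≤ ∑ k ∈ T, (M₀ : ℝ≥0∞) ^ s := by
        apply Finset.sum_le_sum
        intro k _
        split
        · calc ∏ j : Fin s, (m (k j) : ℝ≥0∞) ≤ ∏ j : Fin s, (M₀ : ℝ≥0∞) :=
                Finset.prod_le_prod' fun j _ => by exact_mod_cast Nat.cast_le.mpr (hmM _)
            _ = (M₀ : ℝ≥0∞) ^ s := by simp
        · exact zero_le
    _ = (T.card : ℝ≥0∞) * (M₀ : ℝ≥0∞) ^ s := by rw [Finset.sum_const, nsmul_eq_mul]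
    _ = _ := by
        rw [hT, Fintype.card_piFinset]
        push_cast
        simp [hc]

/-- Lower bound for the count. -/
lemma le_cnt (ha : ∀ j, 0 < a j) (hamono : Monotone a) (hb : ∀ j, 0 < b j)
    (hm : ∀ k, 1 ≤ m k) {s : ℕ} (hs : 1 ≤ s) {x : ℝ} (hx : 0 < x) :
    ((∏ j : Fin s, ⌈(x / (s * a (s-1))) ^ (b (j:ℕ))⁻¹⌉₊ : ℕ) : ℝ≥0∞) ≤ cnt a b m s x := by
  classical
  have hsne : Nonempty (Fin s) := ⟨⟨0, hs⟩⟩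
  set A : ℝ := a (s-1) with hA
  have hA0 : 0 < A := ha _
  have hs0 : (0:ℝ) < s := Nat.cast_pos.mpr hs
  have hsA : (0:ℝ) < s * A := mul_pos hs0 hA0
  set c : Fin s → ℕ := fun j => ⌈(x / (s * A)) ^ (b (j:ℕ))⁻¹⌉₊ with hc
  set T : Finset (Fin s → ℕ) := Fintype.piFinset (fun j => Finset.range (c j)) with hT
  have hmem : ∀ k ∈ T, (∑ j : Fin s, a j * ((k j : ℝ) ^ (b j))) < x := by
    intro k hk
    have hterm : ∀ j : Fin s, a j * ((k j : ℝ) ^ (b j)) < x / s := by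
      intro j
      have hkj : k j ∈ Finset.range (c j) := Fintype.mem_piFinset.mp hk j
      have h1 : (k j : ℝ) < (x / (s * A)) ^ (b (j:ℕ))⁻¹ :=
        Nat.lt_ceil.mp (Finset.mem_range.mp hkj)
      have hja : a (j:ℕ) ≤ A := hamono (Nat.le_sub_one_of_lt j.2)
      have hsa : (0:ℝ) < s * a (j:ℕ) := mul_pos hs0 (ha _)
      have h2 : x / (s * A) ≤ x / (s * a (j:ℕ)) := by
        apply div_le_div_of_nonneg_left hx.le hsa
        exact mul_le_mul_of_nonneg_left hja hs0.le
      have h3 : (k j : ℝ) < (x / (s * a (j:ℕ))) ^ (b (j:ℕ))⁻¹ :=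
        lt_of_lt_of_le h1 (Real.rpow_le_rpow (div_nonneg hx.le hsA.le) h2 (inv_nonneg.mpr (hb _).le))
      have h4 : ((k j : ℝ)) ^ (b (j:ℕ)) < x / (s * a (j:ℕ)) := by
        have := Real.rpow_lt_rpow (Nat.cast_nonneg _) h3 (hb (j:ℕ))
        rwa [Real.rpow_inv_rpow (div_nonneg hx.le hsa.le) (hb (j:ℕ)).ne'] at this
      have := mul_lt_mul_of_pos_left h4 (ha (j:ℕ))
      calc a (j:ℕ) * ((k j : ℝ) ^ (b (j:ℕ))) < a (j:ℕ) * (x / (s * a (j:ℕ))) := this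
        _ = x / s := by rw [mul_div_left_comm, div_mul_cancel_right₀ (ha _).ne', ← div_eq_mul_inv]
    calc (∑ j : Fin s, a j * ((k j : ℝ) ^ (b j))) < ∑ _j : Fin s, x / s :=
          Finset.sum_lt_sum_of_nonempty Finset.univ_nonempty (fun j _ => hterm j)
      _ = x := by
          rw [Finset.sum_const, Finset.card_univ, Fintype.card_fin, nsmul_eq_mul]
          field_simp
  calc ((∏ j : Fin s, ⌈(x / (s * a (s-1))) ^ (b (j:ℕ))⁻¹⌉₊ : ℕ) : ℝ≥0∞)
      = (T.card : ℝ≥0∞) := by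
        rw [hT, Fintype.card_piFinset]
        simp [hc, hA]
    _ = ∑ _k ∈ T, (1:ℝ≥0∞) := by rw [Finset.sum_const, nsmul_eq_mul, mul_one]
    _ ≤ ∑ k ∈ T, (if (∑ j : Fin s, a j * ((k j : ℝ) ^ (b j))) < x then
          ∏ j : Fin s, (m (k j) : ℝ≥0∞) else 0) := by
        apply Finset.sum_le_sum
        intro k hk
        rw [if_pos (hmem k hk)]
        exact Finset.one_le_prod' fun j _ => by exact_mod_cast Nat.one_le_cast.mpr (hm _)
    _ ≤ cnt a b m s x := ENNReal.sum_le_tsum T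

/-- Necessity: an exponential-convergence bound at dimension `s` forces the partial sum
`∑_{j<s} 1/b_j ≤ 1/p`. -/
lemma beta_le (hω : ω ∈ Set.Ioo (0:ℝ) 1) (ha : ∀ j, 0 < a j) (hamono : Monotone a)
    (hb : ∀ j, 0 < b j) (hm : ∀ k, 1 ≤ m k)
    {q p : ℝ} (hq : q ∈ Set.Ioo (0:ℝ) 1) (hp : 0 < p) {s : ℕ} (hs : 1 ≤ s)
    {C M : ℝ} (hC : 0 < C) (hM : 0 < M)
    (hbd : ∀ n : ℕ, 1 ≤ n → minErr ω a b m s n ≤ C * q ^ (((n:ℝ)/M) ^ p)) :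
    (∑ j ∈ Finset.range s, (b j)⁻¹) ≤ p⁻¹ := by
  classical
  set A : ℝ := a (s-1) with hA
  have hA0 : 0 < A := ha _
  have hs0 : (0:ℝ) < s := Nat.cast_pos.mpr hs
  have hsA : (0:ℝ) < s * A := mul_pos hs0 hA0
  set β : ℝ := ∑ j ∈ Finset.range s, (b j)⁻¹ with hβdef
  have hβ : 0 < β :=
    Finset.sum_pos (fun j _ => inv_pos.mpr (hb j)) (Finset.nonempty_range_iff.mpr (by omega))
  -- key inequality
  have key : ∀ n : ℕ, 1 ≤ n →
      ω ^ ((s * A * (n:ℝ) ^ β⁻¹) / 2) ≤ C * q ^ (((n:ℝ)/M) ^ p) := by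
    intro n hn
    refine le_trans ?_ (hbd n hn)
    apply le_minErr hω ha s n
    intro ε hε hcnt
    have hn0 : (0:ℝ) ≤ (n:ℝ) := Nat.cast_nonneg n
    have hxle : X ω ε ≤ s * A * (n:ℝ) ^ β⁻¹ := by
      rcases le_or_gt (X ω ε) 0 with h0 | h0
      · exact h0.trans (by positivity)
      · have h1 := (le_cnt ha hamono hb hm hs h0).trans hcnt
        have h2 : ((∏ j : Fin s, ⌈(X ω ε / (s * A)) ^ (b (j:ℕ))⁻¹⌉₊ : ℕ) : ℝ) ≤ n := by
          exact_mod_cast Nat.cast_le.mp h1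
        have h3 : (X ω ε / (s * A)) ^ β ≤ (n:ℝ) := by
          have hprod : (X ω ε / (s * A)) ^ β
              = ∏ j : Fin s, (X ω ε / (s * A)) ^ (b (j:ℕ))⁻¹ := by
            rw [hβdef, ← Fin.sum_univ_eq_sum_range (fun j => (b j)⁻¹) s]
            exact Real.rpow_sum_of_pos (div_pos h0 hsA) _ _
          rw [hprod]
          refine le_trans (Finset.prod_le_prod
            (fun j _ => Real.rpow_nonneg (div_nonneg h0.le hsA.le) _)
            (fun j _ => Nat.le_ceil _)) ?_
          calc (∏ j : Fin s, (⌈(X ω ε / (s * A)) ^ (b (j:ℕ))⁻¹⌉₊ : ℝ))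
              = ((∏ j : Fin s, ⌈(X ω ε / (s * A)) ^ (b (j:ℕ))⁻¹⌉₊ : ℕ) : ℝ) := by
                push_cast; rfl
            _ ≤ n := h2
        have h4 : X ω ε / (s * A) ≤ (n:ℝ) ^ β⁻¹ := by
          have := Real.rpow_le_rpow (Real.rpow_nonneg (div_nonneg h0.le hsA.le) _) h3
            (inv_nonneg.mpr hβ.le)
          rwa [Real.rpow_rpow_inv (div_nonneg h0.le hsA.le) hβ.ne'] at this
        calc X ω ε = (X ω ε / (s * A)) * (s * A) := by field_simp
          _ ≤ (n:ℝ) ^ β⁻¹ * (s * A) := mul_le_mul_of_nonneg_right h4 hsA.le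
          _ = s * A * (n:ℝ) ^ β⁻¹ := by ring
    -- convert x-bound into ε lower bound
    have hL : (0:ℝ) < ω ^ ((s * A * (n:ℝ) ^ β⁻¹) / 2) := Real.rpow_pos_of_pos hω.1 _
    rw [← Real.log_le_log_iff hL hε, Real.log_rpow hω.1]
    have hX : X ω ε = (-2 * Real.log ε) / Real.log ω⁻¹ := by
      unfold X
      rw [Real.log_pow, Real.log_inv]
      push_cast; ring_nf
    have hlogw : 0 < Real.log ω⁻¹ := by
      rw [Real.log_inv]; nlinarith [Real.log_neg hω.1 hω.2]
    rw [hX, div_le_iff₀ hlogw] at hxle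
    rw [Real.log_inv] at hxle
    nlinarith [hxle]
  -- take logarithms
  have hq0 : 0 < q := hq.1
  have hlogq : Real.log q < 0 := Real.log_neg hq.1 hq.2
  have hlogw : Real.log ω < 0 := Real.log_neg hω.1 hω.2
  set c1 : ℝ := (-Real.log q) / M ^ p with hc1def
  set c2 : ℝ := Real.log C with hc2def
  set c3 : ℝ := (s * A / 2) * (-Real.log ω) with hc3def
  have hMp : 0 < M ^ p := Real.rpow_pos_of_pos hM _
  have hc1 : 0 < c1 := div_pos (by linarith) hMp
  have hc3 : 0 < c3 := mul_pos (by positivity) (by linarith)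
  have habs : ∀ n : ℕ, 1 ≤ n → c1 * (n:ℝ) ^ p ≤ c2 + c3 * (n:ℝ) ^ β⁻¹ := by
    intro n hn
    have hk := key n hn
    have hR : 0 < C * q ^ (((n:ℝ)/M) ^ p) := mul_pos hC (Real.rpow_pos_of_pos hq0 _)
    have hlog := (Real.log_le_log_iff (Real.rpow_pos_of_pos hω.1 _) hR).mpr hk
    rw [Real.log_rpow hω.1, Real.log_mul hC.ne' (Real.rpow_pos_of_pos hq0 _).ne',
      Real.log_rpow hq0] at hlog
    have hdr : ((n:ℝ)/M) ^ p = (n:ℝ) ^ p / M ^ p := Real.div_rpow (Nat.cast_nonneg n) hM.le p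
    rw [hdr] at hlog
    have e1 : c1 * (n:ℝ) ^ p = -((n:ℝ) ^ p / M ^ p * Real.log q) := by
      rw [hc1def]; ring
    have e2 : c3 * (n:ℝ) ^ β⁻¹ = -((s:ℝ) * A * (n:ℝ) ^ β⁻¹ / 2 * Real.log ω) := by
      rw [hc3def]; ring
    rw [e1, e2, hc2def]
    linarith [hlog]
  -- conclude p ≤ β⁻¹
  have hple : p ≤ β⁻¹ := by
    by_contra hcon
    push_neg at hcon
    set r : ℝ := β⁻¹ with hrdef
    have hpr : 0 < p - r := by linarith
    set K : ℝ := max c2 0 + c3 with hKdef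
    have hK : 0 < K := by have := le_max_right c2 0; linarith
    set Y : ℝ := (K / c1) ^ (p - r)⁻¹ with hYdef
    have hY0 : 0 ≤ Y := Real.rpow_nonneg (div_nonneg hK.le hc1.le) _
    set n : ℕ := ⌈Y⌉₊ + 1 with hndef
    have hn1 : 1 ≤ n := by omega
    have hnY : Y < n := by
      calc Y ≤ (⌈Y⌉₊ : ℝ) := Nat.le_ceil Y
        _ < n := by exact_mod_cast Nat.lt_succ_self _
    have hn1' : (1:ℝ) ≤ (n:ℝ) := by exact_mod_cast hn1
    have hnpos : (0:ℝ) < n := by linarith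
    have hnr1 : 1 ≤ (n:ℝ) ^ r := Real.one_le_rpow hn1' (by positivity)
    have hstep1 : c2 + c3 * (n:ℝ) ^ r ≤ K * (n:ℝ) ^ r := by
      have h1 : c2 ≤ max c2 0 * (n:ℝ) ^ r :=
        le_trans (le_max_left c2 0) (le_mul_of_one_le_right (le_max_right c2 0) hnr1)
      rw [hKdef]; nlinarith
    have hstep2 : K * (n:ℝ) ^ r < c1 * (n:ℝ) ^ p := by
      have hsplit : (n:ℝ) ^ p = (n:ℝ) ^ r * (n:ℝ) ^ (p - r) := by
        rw [← Real.rpow_add hnpos]; ring_nf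
      have hYpow : Y ^ (p - r) = K / c1 :=
        Real.rpow_inv_rpow (div_nonneg hK.le hc1.le) hpr.ne'
      have hlt : K / c1 < (n:ℝ) ^ (p - r) := by
        rw [← hYpow]
        exact Real.rpow_lt_rpow hY0 hnY hpr
      have hKlt : K < c1 * (n:ℝ) ^ (p - r) := by
        rwa [div_lt_iff₀ hc1, mul_comm] at hlt
      have hnr0 : 0 < (n:ℝ) ^ r := Real.rpow_pos_of_pos hnpos _
      calc K * (n:ℝ) ^ r < (c1 * (n:ℝ) ^ (p - r)) * (n:ℝ) ^ r :=
            mul_lt_mul_of_pos_right hKlt hnr0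
        _ = c1 * (n:ℝ) ^ p := by rw [hsplit]; ring
    have := habs n hn1
    linarith
  -- from p ≤ β⁻¹ deduce β ≤ p⁻¹
  have h1 : p * β ≤ 1 := by
    calc p * β ≤ β⁻¹ * β := mul_le_mul_of_nonneg_right hple hβ.le
      _ = 1 := inv_mul_cancel₀ hβ.ne'
  have : β ≤ 1 / p := (le_div_iff₀ hp).mpr (by linarith)
  rwa [one_div] at this

/-- Sufficiency: if `B = ∑ 1/b_j < ∞`, then exponential convergence holds with
`p = 1/B` and `q = √ω`. -/
lemma upper_all (hω : ω ∈ Set.Ioo (0:ℝ) 1) (ha : ∀ j, 0 < a j) (hamono : Monotone a)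
    (hb : ∀ j, 0 < b j) (hmbd : ∃ M, ∀ k, m k ≤ M)
    (hsum : Summable (fun j : ℕ => (b j)⁻¹)) (s : ℕ) (hs : 1 ≤ s) :
    ∃ C M : ℝ, 0 < C ∧ 0 < M ∧
      ∀ n : ℕ, 1 ≤ n → minErr ω a b m s n ≤
        C * (ω ^ ((2:ℝ)⁻¹)) ^ (((n : ℝ) / M) ^ (∑' j : ℕ, (b j)⁻¹)⁻¹) := by
  classical
  obtain ⟨M₀, hmM⟩ := hmbd
  set M₁ : ℕ := max M₀ 1 with hM₁def
  have hmM₁ : ∀ k, m k ≤ M₁ := fun k => le_trans (hmM k) (le_max_left _ _)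
  have hM₁1 : 1 ≤ M₁ := le_max_right _ _
  set B : ℝ := ∑' j : ℕ, (b j)⁻¹ with hBdef
  have hB : 0 < B := by
    have h0 : (b 0)⁻¹ ≤ B := Summable.le_tsum hsum 0 (fun j _ => (inv_pos.mpr (hb j)).le)
    have := inv_pos.mpr (hb 0)
    linarith
  set q : ℝ := ω ^ ((2:ℝ)⁻¹) with hqdef
  have hq0 : 0 < q := Real.rpow_pos_of_pos hω.1 _
  set a0 : ℝ := a 0 with ha0def
  have ha0 : 0 < a0 := ha 0
  set Kr : ℝ := ((2 * M₁ : ℕ) : ℝ) ^ s with hKrdef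
  have hKr1 : (1:ℝ) ≤ Kr := one_le_pow₀ (by exact_mod_cast by omega : (1:ℝ) ≤ ((2*M₁:ℕ):ℝ))
  have hKr0 : 0 < Kr := by linarith
  refine ⟨2 * q ^ (-a0), Kr / a0 ^ B, by positivity, by positivity, ?_⟩
  intro n hn
  set Mr : ℝ := Kr / a0 ^ B with hMrdef
  have ha0B : 0 < a0 ^ B := Real.rpow_pos_of_pos ha0 _
  have hMr : 0 < Mr := by positivity
  have hn0 : (0:ℝ) < n := by exact_mod_cast hn
  rcases le_or_gt Kr (n:ℝ) with hcase | hcase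
  · -- large n
    set u : ℝ := ((n:ℝ) / Kr) ^ B⁻¹ with hudef
    have hnK1 : (1:ℝ) ≤ (n:ℝ)/Kr := (one_le_div hKr0).mpr hcase
    have hu1 : 1 ≤ u := Real.one_le_rpow hnK1 (by positivity)
    have hu0 : 0 < u := by linarith
    set x : ℝ := a0 * (u - 1) with hxdef
    have hx0 : 0 ≤ x := by nlinarith
    -- count bound at cutoff x
    have hcnt : cnt a b m s (X ω (ω ^ (x / 2))) ≤ (n : ℝ≥0∞) := by
      rw [X_rpow hω]
      refine le_trans (cnt_le ha hamono hb hmM₁ s x) ?_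
      have hnat : ((∏ j : Fin s, ⌈(max x 0 / a 0) ^ (b (j:ℕ))⁻¹⌉₊) * M₁ ^ s : ℕ) ≤ n := by
        have hreal : (((∏ j : Fin s, ⌈(max x 0 / a 0) ^ (b (j:ℕ))⁻¹⌉₊) * M₁ ^ s : ℕ) : ℝ)
            ≤ (n:ℝ) := by
          push_cast
          have hmax : max x 0 = x := max_eq_left hx0
          have hxa : max x 0 / a 0 = u - 1 := by rw [hmax, hxdef, ← ha0def, mul_div_cancel_left₀ _ ha0.ne']
          have hterm : ∀ j : Fin s, (⌈(max x 0 / a 0) ^ (b (j:ℕ))⁻¹⌉₊ : ℝ)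
              ≤ 2 * u ^ (b (j:ℕ))⁻¹ := by
            intro j
            have h1 : (max x 0 / a 0) ^ (b (j:ℕ))⁻¹ ≤ u ^ (b (j:ℕ))⁻¹ := by
              apply Real.rpow_le_rpow (by rw [hxa]; linarith) (by rw [hxa]; linarith)
                (inv_nonneg.mpr (hb _).le)
            have h2 : (1:ℝ) ≤ u ^ (b (j:ℕ))⁻¹ := Real.one_le_rpow hu1 (inv_nonneg.mpr (hb _).le)
            have h3 : (⌈(max x 0 / a 0) ^ (b (j:ℕ))⁻¹⌉₊ : ℝ)
                < (max x 0 / a 0) ^ (b (j:ℕ))⁻¹ + 1 :=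
              Nat.ceil_lt_add_one (Real.rpow_nonneg (by rw [hxa]; linarith) _)
            linarith
          have hprod : (∏ j : Fin s, (⌈(max x 0 / a 0) ^ (b (j:ℕ))⁻¹⌉₊ : ℝ))
              ≤ ∏ j : Fin s, (2 * u ^ (b (j:ℕ))⁻¹) :=
            Finset.prod_le_prod (fun j _ => Nat.cast_nonneg _) (fun j _ => hterm j)
          have hprod2 : (∏ j : Fin s, (2 * u ^ (b (j:ℕ))⁻¹))
              = 2 ^ s * u ^ (∑ j ∈ Finset.range s, (b j)⁻¹) := by
            rw [Finset.prod_mul_distrib, Finset.prod_const, Finset.card_univ, Fintype.card_fin,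
              ← Fin.sum_univ_eq_sum_range (fun j => (b j)⁻¹) s]
            rw [Real.rpow_sum_of_pos hu0]
          have hβB : (∑ j ∈ Finset.range s, (b j)⁻¹) ≤ B :=
            Summable.sum_le_tsum (Finset.range s) (fun j _ => (inv_pos.mpr (hb j)).le) hsum
          have huB : u ^ (∑ j ∈ Finset.range s, (b j)⁻¹) ≤ u ^ B :=
            Real.rpow_le_rpow_of_exponent_le hu1 hβB
          have huBval : u ^ B = (n:ℝ) / Kr :=
            Real.rpow_inv_rpow (by positivity) hB.ne'
          calc (∏ j : Fin s, (⌈(max x 0 / a 0) ^ (b (j:ℕ))⁻¹⌉₊ : ℝ)) * (M₁:ℝ) ^ s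
              ≤ (2 ^ s * u ^ (∑ j ∈ Finset.range s, (b j)⁻¹)) * (M₁:ℝ) ^ s := by
                apply mul_le_mul_of_nonneg_right (hprod.trans (le_of_eq hprod2)) (by positivity)
            _ ≤ (2 ^ s * ((n:ℝ)/Kr)) * (M₁:ℝ) ^ s := by
                apply mul_le_mul_of_nonneg_right _ (by positivity)
                apply mul_le_mul_of_nonneg_left (huB.trans (le_of_eq huBval)) (by positivity)
            _ = Kr * ((n:ℝ)/Kr) := by
                rw [hKrdef]; push_cast; ring
            _ = (n:ℝ) := by field_simp
        exact_mod_cast hreal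
      exact_mod_cast Nat.cast_le.mpr hnat
    have hmle : minErr ω a b m s n ≤ ω ^ (x / 2) :=
      minErr_le s n (Real.rpow_pos_of_pos hω.1 _) hcnt
    -- rewrite ω^(x/2) = q^x and bound
    have hqx : ω ^ (x / 2) = q ^ x := by
      rw [hqdef, ← Real.rpow_mul hω.1.le]
      congr 1
      ring
    have hnMr : (n:ℝ)/Mr = ((n:ℝ)/Kr) * a0 ^ B := by
      rw [hMrdef]; field_simp
    have he : ((n:ℝ)/Mr) ^ B⁻¹ = u * a0 := by
      rw [hnMr, Real.mul_rpow (by positivity) (by positivity),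
        Real.rpow_rpow_inv ha0.le hB.ne', hudef]
    have hfin : q ^ x ≤ 2 * q ^ (-a0) * q ^ (((n:ℝ)/Mr) ^ B⁻¹) := by
      rw [he]
      have hxsplit : x = u * a0 + (-a0) := by rw [hxdef]; ring
      rw [hxsplit, Real.rpow_add hq0]
      have h1 : 0 < q ^ (u*a0) := Real.rpow_pos_of_pos hq0 _
      have h2 : 0 < q ^ (-a0) := Real.rpow_pos_of_pos hq0 _
      nlinarith
    calc minErr ω a b m s n ≤ ω ^ (x / 2) := hmle
      _ = q ^ x := hqx
      _ ≤ _ := hfin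
  · -- small n
    have hq1 : q < 1 := Real.rpow_lt_one hω.1.le hω.2 (by norm_num)
    set e : ℝ := ((n:ℝ)/Mr) ^ B⁻¹ with hedef
    have hea0 : e ≤ a0 := by
      have h1 : (n:ℝ)/Mr ≤ a0 ^ B := by
        rw [hMrdef, div_div_eq_mul_div]
        rw [div_le_iff₀ hKr0]
        nlinarith
      calc e ≤ (a0 ^ B) ^ B⁻¹ :=
            Real.rpow_le_rpow (by positivity) h1 (inv_nonneg.mpr hB.le)
        _ = a0 := Real.rpow_rpow_inv ha0.le hB.ne'
    have hone : (1:ℝ) ≤ q ^ (-a0) * q ^ e := by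
      rw [← Real.rpow_add hq0]
      exact Real.one_le_rpow_of_pos_of_le_one_of_nonpos hq0 hq1.le (by linarith)
    calc minErr ω a b m s n ≤ 2 := minErr_le_two hω ha s n
      _ ≤ 2 * q ^ (-a0) * q ^ e := by nlinarith
      _ = 2 * q ^ (-a0) * q ^ (((n:ℝ)/Mr) ^ B⁻¹) := by rw [hedef]

end Aux

/-- Uniform exponential convergence (`∃ q ∈ (0,1), p > 0` and for each `s` constants
`C_s, M_s > 0` with `e(n, APP_s) ≤ C_s q^{(n/M_s)^p}` for all `n`) holds iff
`B = ∑_j 1/b_j < ∞`; and if `B < ∞` then the supremum of admissible `p` equals `1/B`. -/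
theorem stmt14 (ω : ℝ) (hω : ω ∈ Set.Ioo (0:ℝ) 1)
    (a b : ℕ → ℝ) (ha : ∀ j, 0 < a j) (hamono : Monotone a)
    (b₀ : ℝ) (hb₀ : 0 < b₀) (hb : ∀ j, b₀ ≤ b j)
    (m : ℕ → ℕ) (hm : ∀ k, 1 ≤ m k) (hmbd : ∃ M, ∀ k, m k ≤ M) :
    ((∃ q p : ℝ, q ∈ Set.Ioo (0:ℝ) 1 ∧ 0 < p ∧
        ∀ s : ℕ, 1 ≤ s → ∃ C M : ℝ, 0 < C ∧ 0 < M ∧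
          ∀ n : ℕ, 1 ≤ n → minErr ω a b m s n ≤ C * q ^ (((n : ℝ) / M) ^ p))
      ↔ Summable (fun j : ℕ => (b j)⁻¹)) ∧
    (Summable (fun j : ℕ => (b j)⁻¹) →
      sSup {p : ℝ | 0 < p ∧ ∃ q ∈ Set.Ioo (0:ℝ) 1,
          ∀ s : ℕ, 1 ≤ s → ∃ C M : ℝ, 0 < C ∧ 0 < M ∧
            ∀ n : ℕ, 1 ≤ n → minErr ω a b m s n ≤ C * q ^ (((n : ℝ) / M) ^ p)}
        = (∑' j : ℕ, (b j)⁻¹)⁻¹) := by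
  have hb' : ∀ j, 0 < b j := fun j => lt_of_lt_of_le hb₀ (hb j)
  have hq'0 : 0 < ω ^ ((2:ℝ)⁻¹) := Real.rpow_pos_of_pos hω.1 _
  have hq'1 : ω ^ ((2:ℝ)⁻¹) < 1 := Real.rpow_lt_one hω.1.le hω.2 (by norm_num)
  have hBpos : Summable (fun j : ℕ => (b j)⁻¹) → 0 < ∑' j : ℕ, (b j)⁻¹ := by
    intro hsum
    have h0 : (b 0)⁻¹ ≤ ∑' j : ℕ, (b j)⁻¹ :=
      Summable.le_tsum hsum 0 (fun j _ => (inv_pos.mpr (hb' j)).le)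
    have := inv_pos.mpr (hb' 0)
    linarith
  have hpartial : ∀ q p : ℝ, q ∈ Set.Ioo (0:ℝ) 1 → 0 < p →
      (∀ s : ℕ, 1 ≤ s → ∃ C M : ℝ, 0 < C ∧ 0 < M ∧
        ∀ n : ℕ, 1 ≤ n → minErr ω a b m s n ≤ C * q ^ (((n : ℝ) / M) ^ p)) →
      ∀ s : ℕ, (∑ j ∈ Finset.range s, (b j)⁻¹) ≤ p⁻¹ := by
    intro q p hq hp hall s
    rcases Nat.eq_zero_or_pos s with rfl | hs
    · simpa using (inv_pos.mpr hp).le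
    · obtain ⟨C, M, hC, hM, hbd⟩ := hall s hs
      exact beta_le hω ha hamono hb' hm hq hp hs hC hM hbd
  constructor
  · constructor
    · rintro ⟨q, p, hq, hp, hall⟩
      exact summable_of_sum_range_le (fun j => (inv_pos.mpr (hb' j)).le)
        (hpartial q p hq hp hall)
    · intro hsum
      exact ⟨ω ^ ((2:ℝ)⁻¹), (∑' j : ℕ, (b j)⁻¹)⁻¹, ⟨hq'0, hq'1⟩,
        inv_pos.mpr (hBpos hsum),
        fun s hs => upper_all hω ha hamono hb' hmbd hsum s hs⟩
  · intro hsum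
    have hB : 0 < ∑' j : ℕ, (b j)⁻¹ := hBpos hsum
    have hmem : (∑' j : ℕ, (b j)⁻¹)⁻¹ ∈ {p : ℝ | 0 < p ∧ ∃ q ∈ Set.Ioo (0:ℝ) 1,
        ∀ s : ℕ, 1 ≤ s → ∃ C M : ℝ, 0 < C ∧ 0 < M ∧
          ∀ n : ℕ, 1 ≤ n → minErr ω a b m s n ≤ C * q ^ (((n : ℝ) / M) ^ p)} :=
      ⟨inv_pos.mpr hB, ω ^ ((2:ℝ)⁻¹), ⟨hq'0, hq'1⟩,
        fun s hs => upper_all hω ha hamono hb' hmbd hsum s hs⟩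
    have hub : ∀ p ∈ {p : ℝ | 0 < p ∧ ∃ q ∈ Set.Ioo (0:ℝ) 1,
        ∀ s : ℕ, 1 ≤ s → ∃ C M : ℝ, 0 < C ∧ 0 < M ∧
          ∀ n : ℕ, 1 ≤ n → minErr ω a b m s n ≤ C * q ^ (((n : ℝ) / M) ^ p)},
        p ≤ (∑' j : ℕ, (b j)⁻¹)⁻¹ := by
      rintro p ⟨hp0, q, hq, hall⟩
      have hBle : (∑' j : ℕ, (b j)⁻¹) ≤ p⁻¹ :=
        Summable.tsum_le_of_sum_range_le hsum (hpartial q p hq hp0 hall)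
      have h1 : p * (∑' j : ℕ, (b j)⁻¹) ≤ 1 := by
        calc p * (∑' j : ℕ, (b j)⁻¹) ≤ p * p⁻¹ :=
              mul_le_mul_of_nonneg_left hBle hp0.le
          _ = 1 := mul_inv_cancel₀ hp0.ne'
      rw [← one_div]
      exact (le_div_iff₀ hB).mpr (by linarith)
    exact le_antisymm (csSup_le ⟨_, hmem⟩ hub) (le_csSup ⟨_, hub⟩ hmem)
end

section
/- Sum-exponential bound: for any η > 0, if m_0 = 1 then log n(ε, APP_s) ≤ 2η·log ε^{-1} + C_η · Σ_{j=1}^s ω^{η a_j}, where C_η = m_max · Σ_{k=1}^∞ ω^{η a_1 (k^{b_0} - 1)} < ∞ with b_0 = inf_j b_j > 0. Consequently, if lim_j a_j = ∞ then EC-weak tractability holds: lim_{s+ε^{-1}→∞} (log n(ε, APP_s))/(s + log ε^{-1}) = 0. -/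
open scoped ENNReal

lemma pi_tsum_prod : ∀ {s : ℕ} (g : Fin s → ℕ → ℝ≥0∞),
    (∑' k : Fin s → ℕ, ∏ j, g j (k j)) = ∏ j, ∑' n, g j n := by
  intro s
  induction s with
  | zero =>
    intro g
    simp only [Finset.univ_eq_empty, Finset.prod_empty]
    exact tsum_eq_single (default : Fin 0 → ℕ) (fun b hb => absurd (Subsingleton.elim b default) hb)
  | succ s ih =>
    intro g
    rw [← (Fin.consEquiv (fun _ : Fin (s+1) => ℕ)).tsum_eq]
    have : ∀ p : ℕ × (Fin s → ℕ),
        (∏ j, g j ((Fin.consEquiv (fun _ : Fin (s+1) => ℕ)) (p.1, p.2) j))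
          = g 0 p.1 * ∏ j : Fin s, g j.succ (p.2 j) := by
      intro p
      rw [Fin.prod_univ_succ]
      simp [Fin.consEquiv]
    calc (∑' p : ℕ × (Fin s → ℕ), ∏ j, g j ((Fin.consEquiv (fun _ : Fin (s+1) => ℕ)) p j))
        = ∑' p : ℕ × (Fin s → ℕ), g 0 p.1 * ∏ j : Fin s, g j.succ (p.2 j) := by
          apply tsum_congr; intro p; exact this p
      _ = ∑' n : ℕ, ∑' k : Fin s → ℕ, g 0 n * ∏ j : Fin s, g j.succ (k j) := by
          exact ENNReal.tsum_prod (f := fun (n : ℕ) (k : Fin s → ℕ) => g 0 n * ∏ j : Fin s, g j.succ (k j))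
      _ = (∑' n : ℕ, g 0 n) * ∑' k : Fin s → ℕ, ∏ j : Fin s, g j.succ (k j) := by
          simp_rw [ENNReal.tsum_mul_left]; rw [ENNReal.tsum_mul_right]
      _ = ∏ j, ∑' n, g j n := by rw [ih, Fin.prod_univ_succ]

lemma summable_exp_neg_rpow_aux {c p : ℝ} (hc : 0 < c) (hp : 0 < p) :
    Summable (fun k : ℕ => Real.exp (-(c * ((k:ℝ)+1) ^ p))) := by
  set n : ℕ := ⌈2/p⌉₊ with hn
  have hnp : 1 < p * n := by
    have h2 : (2:ℝ)/p ≤ (n:ℝ) := Nat.le_ceil _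
    have : (2:ℝ) ≤ p * n := by
      rw [div_le_iff₀ hp] at h2; linarith [h2]
    linarith
  have key : ∀ k : ℕ, Real.exp (-(c * ((k:ℝ)+1) ^ p))
      ≤ (n.factorial / c ^ n) * (((k:ℝ)+1) ^ (p * n))⁻¹ := by
    intro k
    have hk1 : (0:ℝ) < (k:ℝ)+1 := by positivity
    have hu : (0:ℝ) < ((k:ℝ)+1) ^ p := Real.rpow_pos_of_pos hk1 _
    have hcu : (0:ℝ) < c * ((k:ℝ)+1) ^ p := by positivity
    have h1 : (c * ((k:ℝ)+1) ^ p) ^ n / n.factorial ≤ Real.exp (c * ((k:ℝ)+1) ^ p) :=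
      Real.pow_div_factorial_le_exp (x := c * ((k:ℝ)+1) ^ p) hcu.le n
    have h2 : Real.exp (-(c * ((k:ℝ)+1) ^ p)) = (Real.exp (c * ((k:ℝ)+1) ^ p))⁻¹ := by
      rw [Real.exp_neg]
    rw [h2]
    have hpow : (0:ℝ) < (c * ((k:ℝ)+1) ^ p) ^ n / n.factorial := by positivity
    have := one_div_le_one_div_of_le hpow h1
    rw [one_div, one_div] at this
    refine this.trans (le_of_eq ?_)
    have hrw : ((k:ℝ)+1) ^ (p * (n:ℝ)) = (((k:ℝ)+1) ^ p) ^ (n:ℕ) := by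
      rw [Real.rpow_mul hk1.le, Real.rpow_natCast]
    rw [hrw, mul_pow, inv_div]
    have hfac : (0:ℝ) < n.factorial := by positivity
    field_simp
  have hsum : Summable (fun k : ℕ => (n.factorial / c ^ n) * (((k:ℝ)+1) ^ (p * (n:ℝ)))⁻¹) := by
    apply Summable.mul_left
    have h1 : Summable (fun k : ℕ => (((k:ℝ)) ^ (p * (n:ℝ)))⁻¹) := by
      have := (Real.summable_nat_rpow_inv (p := p * n)).mpr hnp
      exact this
    have h2 := (summable_nat_add_iff 1).mpr h1
    refine h2.congr ?_
    intro k
    push_cast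
    ring_nf
  exact Summable.of_nonneg_of_le (fun k => (Real.exp_pos _).le) key hsum

lemma stmt17_summ (ω : ℝ) (hω : ω ∈ Set.Ioo (0:ℝ) 1) (c : ℝ) (hc : 0 < c)
    (b₀ : ℝ) (hb₀ : 0 < b₀) :
    Summable (fun k : ℕ => ω ^ (c * (((k : ℝ) + 1) ^ b₀ - 1))) := by
  have hL : Real.log ω < 0 := Real.log_neg hω.1 hω.2
  have hd : 0 < (-Real.log ω) * c := mul_pos (by linarith) hc
  have h := (summable_exp_neg_rpow_aux hd hb₀).mul_left (Real.exp ((-Real.log ω) * c))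
  refine h.congr ?_
  intro k
  rw [Real.rpow_def_of_pos hω.1, ← Real.exp_add]
  congr 1
  ring

lemma stmt17_bound (ω : ℝ) (hω : ω ∈ Set.Ioo (0:ℝ) 1)
    (a b : ℕ → ℝ) (ha : ∀ j, 0 < a j) (hamono : Monotone a)
    (b₀ : ℝ) (hb₀ : 0 < b₀) (hb : ∀ j, b₀ ≤ b j)
    (m : ℕ → ℕ) (hm : ∀ k, 1 ≤ m k) (mmax : ℕ) (hmmax : ∀ k, m k ≤ mmax)
    (hm0 : m 0 = 1) (η : ℝ) (hη : 0 < η) (s : ℕ) (ε : ℝ) (hε : ε ∈ Set.Ioo (0:ℝ) 1) :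
    Real.log ((nInfo ω a b m s ε).toReal)
      ≤ 2 * η * Real.log ε⁻¹ +
        ((mmax : ℝ) * ∑' k : ℕ, ω ^ (η * a 0 * (((k : ℝ) + 1) ^ b₀ - 1))) *
          ∑ j ∈ Finset.range s, ω ^ (η * a j) := by
  classical
  obtain ⟨hω0, hω1⟩ := hω
  obtain ⟨hε0, hε1⟩ := hε
  set L := Real.log ω with hLdef
  have hL : L < 0 := Real.log_neg hω0 hω1
  have hεi : 1 < ε⁻¹ := (one_lt_inv₀ hε0).mpr hε1
  have hlogε : 0 < Real.log ε⁻¹ := Real.log_pos hεi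
  set x := X ω ε with hxdef
  have hxval : (-L) * x = 2 * Real.log ε⁻¹ := by
    rw [hxdef, X, Real.log_inv, Real.log_pow]
    push_cast
    rw [← hLdef]
    field_simp
    exact mul_div_cancel_left₀ _ hL.ne
  have hx : 0 < x := by
    have h2 : (0:ℝ) < 2 * Real.log ε⁻¹ := by linarith
    nlinarith
  have hbj0 : ∀ j : ℕ, b j ≠ 0 := fun j => ne_of_gt (lt_of_lt_of_le hb₀ (hb j))
  -- S and its properties
  set S : ℝ := ∑' k : ℕ, ω ^ (η * a 0 * (((k : ℝ) + 1) ^ b₀ - 1)) with hSdef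
  have hSsum : Summable (fun k : ℕ => ω ^ (η * a 0 * (((k : ℝ) + 1) ^ b₀ - 1))) :=
    stmt17_summ ω ⟨hω0, hω1⟩ (η * a 0) (mul_pos hη (ha 0)) b₀ hb₀
  have hS0 : 0 ≤ S := tsum_nonneg fun k => Real.rpow_nonneg hω0.le _
  -- the real factor functions
  set g : ℕ → ℕ → ℝ := fun j n => (m n : ℝ) * ω ^ (η * a j * ((n:ℝ) ^ (b j))) with hgdef
  have hg0 : ∀ j n, 0 ≤ g j n := fun j n => by
    exact mul_nonneg (Nat.cast_nonneg _) (Real.rpow_nonneg hω0.le _)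
  -- per-term bound for shifted terms
  have hterm : ∀ j k : ℕ, g j (k+1)
      ≤ (mmax:ℝ) * ω ^ (η * a j) * ω ^ (η * a 0 * (((k:ℝ) + 1) ^ b₀ - 1)) := by
    intro j k
    have hk1 : (1:ℝ) ≤ (k:ℝ) + 1 := by have := Nat.cast_nonneg (α:=ℝ) k; linarith
    have hcast : ((k+1:ℕ):ℝ) = (k:ℝ)+1 := by push_cast; ring
    have hsplit : ω ^ (η * a j * (((k:ℝ)+1) ^ (b j)))
        = ω ^ (η * a j) * ω ^ (η * a j * ((((k:ℝ)+1) ^ (b j)) - 1)) := by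
      rw [← Real.rpow_add hω0]
      congr 1
      push_cast
      ring
    have hexp : η * a 0 * (((k:ℝ)+1) ^ b₀ - 1) ≤ η * a j * ((((k:ℝ)+1) ^ (b j)) - 1) := by
      have h1 : ((k:ℝ)+1) ^ b₀ ≤ ((k:ℝ)+1) ^ (b j) :=
        Real.rpow_le_rpow_of_exponent_le hk1 (hb j)
      have h2 : (1:ℝ) ≤ ((k:ℝ)+1) ^ b₀ := by
        calc (1:ℝ) = ((k:ℝ)+1) ^ (0:ℝ) := (Real.rpow_zero _).symm
        _ ≤ ((k:ℝ)+1) ^ b₀ := Real.rpow_le_rpow_of_exponent_le hk1 hb₀.le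
      have h3 : a 0 ≤ a j := hamono (Nat.zero_le j)
      have h4 : η * a 0 ≤ η * a j := mul_le_mul_of_nonneg_left h3 hη.le
      apply mul_le_mul h4 (by linarith) (by linarith) (mul_nonneg hη.le (ha j).le)
    have h5 : ω ^ (η * a j * ((((k:ℝ)+1) ^ (b j)) - 1)) ≤ ω ^ (η * a 0 * (((k:ℝ)+1) ^ b₀ - 1)) :=
      Real.rpow_le_rpow_of_exponent_ge hω0 hω1.le hexp
    have hmle : ((m (k+1) : ℝ)) ≤ (mmax : ℝ) := by exact_mod_cast hmmax (k+1)
    calc g j (k+1) = (m (k+1) : ℝ) * (ω ^ (η * a j) * ω ^ (η * a j * ((((k:ℝ)+1) ^ (b j)) - 1))) := by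
          show (m (k+1) : ℝ) * ω ^ (η * a j * (((k+1:ℕ):ℝ) ^ (b j))) = _
          rw [hcast, hsplit]
      _ ≤ (mmax:ℝ) * (ω ^ (η * a j) * ω ^ (η * a 0 * (((k:ℝ)+1) ^ b₀ - 1))) := by
          apply mul_le_mul hmle _ (by positivity) (Nat.cast_nonneg _)
          exact mul_le_mul_of_nonneg_left h5 (Real.rpow_nonneg hω0.le _)
      _ = (mmax:ℝ) * ω ^ (η * a j) * ω ^ (η * a 0 * (((k:ℝ) + 1) ^ b₀ - 1)) := by ring
  -- summability of g j
  have hgs : ∀ j, Summable (g j) := by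
    intro j
    apply (summable_nat_add_iff 1).mp
    apply Summable.of_nonneg_of_le (fun k => hg0 j (k+1)) (hterm j)
    exact hSsum.mul_left _
  -- factor sum bound
  have hTj : ∀ j, (∑' n, g j n) ≤ 1 + ((mmax:ℝ) * S) * ω ^ (η * a j) := by
    intro j
    rw [Summable.tsum_eq_zero_add (hgs j)]
    have hg00 : g j 0 = 1 := by
      rw [hgdef]
      simp [hm0, Real.zero_rpow (hbj0 j)]
    rw [hg00]
    have h1 : (∑' k, g j (k+1)) ≤ ∑' k : ℕ, (mmax:ℝ) * ω ^ (η * a j) * ω ^ (η * a 0 * (((k:ℝ) + 1) ^ b₀ - 1)) := by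
      apply Summable.tsum_le_tsum (hterm j) ((summable_nat_add_iff 1).mpr (hgs j)) (hSsum.mul_left _)
    rw [tsum_mul_left] at h1
    have : (mmax:ℝ) * ω ^ (η * a j) * S = ((mmax:ℝ) * S) * ω ^ (η * a j) := by ring
    linarith [h1, this]
  -- ENNReal part
  set A : ℝ := Real.exp (η * (2 * Real.log ε⁻¹)) with hAdef
  have hA0 : 0 < A := Real.exp_pos _
  set G : Fin s → ℕ → ℝ≥0∞ := fun j n => ENNReal.ofReal (g (j:ℕ) n) with hGdef
  have hpt : ∀ k : Fin s → ℕ,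
      (if (∑ j : Fin s, a j * ((k j : ℝ) ^ (b j))) < X ω ε then
        ∏ j : Fin s, (m (k j) : ℝ≥0∞) else 0)
        ≤ ENNReal.ofReal A * ∏ j : Fin s, G j (k j) := by
    intro k
    split_ifs with hcond
    · set D := ∑ j : Fin s, a j * ((k j : ℝ) ^ (b j)) with hDdef
      have hDx : D < x := hcond
      have hreal : (∏ j : Fin s, (m (k j) : ℝ)) ≤ A * ∏ j : Fin s, g (j:ℕ) (k j) := by
        have hprod : ∏ j : Fin s, g (j:ℕ) (k j)
            = (∏ j : Fin s, (m (k j) : ℝ))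
              * ∏ j : Fin s, ω ^ (η * a (j:ℕ) * ((k j : ℝ) ^ (b (j:ℕ)))) := by
          rw [← Finset.prod_mul_distrib]
        have hexp : (∏ j : Fin s, ω ^ (η * a (j:ℕ) * ((k j : ℝ) ^ (b (j:ℕ)))))
            = Real.exp (L * (η * D)) := by
          calc (∏ j : Fin s, ω ^ (η * a (j:ℕ) * ((k j : ℝ) ^ (b (j:ℕ)))))
              = ∏ j : Fin s, Real.exp (L * (η * (a (j:ℕ) * ((k j : ℝ) ^ (b (j:ℕ)))))) := by
                refine Finset.prod_congr rfl fun j _ => ?_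
                rw [Real.rpow_def_of_pos hω0]
                congr 1
                ring
            _ = Real.exp (∑ j : Fin s, L * (η * (a (j:ℕ) * ((k j : ℝ) ^ (b (j:ℕ)))))) :=
                (Real.exp_sum _ _).symm
            _ = Real.exp (L * (η * D)) := by
                congr 1
                rw [hDdef, Finset.mul_sum, Finset.mul_sum]
        have hge1 : 1 ≤ A * Real.exp (L * (η * D)) := by
          rw [hAdef, ← Real.exp_add]
          apply Real.one_le_exp
          nlinarith [mul_pos (mul_pos hη (neg_pos.mpr hL)) (sub_pos.mpr hDx)]
        have hpm : 0 ≤ ∏ j : Fin s, (m (k j) : ℝ) :=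
          Finset.prod_nonneg fun j _ => Nat.cast_nonneg _
        calc (∏ j : Fin s, (m (k j) : ℝ)) = (∏ j : Fin s, (m (k j) : ℝ)) * 1 := (mul_one _).symm
          _ ≤ (∏ j : Fin s, (m (k j) : ℝ)) * (A * Real.exp (L * (η * D))) :=
              mul_le_mul_of_nonneg_left hge1 hpm
          _ = A * ((∏ j : Fin s, (m (k j) : ℝ)) * Real.exp (L * (η * D))) := by ring
          _ = A * ∏ j : Fin s, g (j:ℕ) (k j) := by rw [hprod, hexp]
      have hlhs : (∏ j : Fin s, (m (k j) : ℝ≥0∞))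
          = ENNReal.ofReal (∏ j : Fin s, (m (k j) : ℝ)) := by
        rw [← Nat.cast_prod, ← Nat.cast_prod, ENNReal.ofReal_natCast]
      have hrhs : ENNReal.ofReal A * ∏ j : Fin s, G j (k j)
          = ENNReal.ofReal (A * ∏ j : Fin s, g (j:ℕ) (k j)) := by
        rw [ENNReal.ofReal_mul hA0.le,
          ENNReal.ofReal_prod_of_nonneg (f := fun j : Fin s => g (j:ℕ) (k j)) (fun (j : Fin s) _ => hg0 (j:ℕ) (k j))]
      rw [hlhs, hrhs]
      exact ENNReal.ofReal_le_ofReal hreal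
    · exact zero_le
  have hnle : nInfo ω a b m s ε ≤ ENNReal.ofReal A * ∏ j : Fin s, ∑' n, G j n := by
    calc nInfo ω a b m s ε ≤ ∑' k : Fin s → ℕ, (ENNReal.ofReal A * ∏ j : Fin s, G j (k j)) :=
        ENNReal.tsum_le_tsum hpt
      _ = ENNReal.ofReal A * ∑' k : Fin s → ℕ, ∏ j : Fin s, G j (k j) := ENNReal.tsum_mul_left
      _ = ENNReal.ofReal A * ∏ j : Fin s, ∑' n, G j n := by rw [pi_tsum_prod]
  set B : ℕ → ℝ := fun j => 1 + ((mmax:ℝ) * S) * ω ^ (η * a j) with hBdef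
  have hB1 : ∀ j : ℕ, 1 ≤ B j := fun j =>
    le_add_of_nonneg_right (mul_nonneg (mul_nonneg (Nat.cast_nonneg _) hS0)
      (Real.rpow_nonneg hω0.le _))
  have hB0 : ∀ j : ℕ, 0 < B j := fun j => lt_of_lt_of_le one_pos (hB1 j)
  have hfac : ∀ j : Fin s, (∑' n, G j n) ≤ ENNReal.ofReal (B (j:ℕ)) := by
    intro j
    rw [hGdef]
    rw [← ENNReal.ofReal_tsum_of_nonneg (hg0 (j:ℕ)) (hgs (j:ℕ))]
    exact ENNReal.ofReal_le_ofReal (hTj (j:ℕ))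
  have hn2 : nInfo ω a b m s ε ≤ ENNReal.ofReal (A * ∏ j : Fin s, B (j:ℕ)) := by
    refine hnle.trans ?_
    rw [ENNReal.ofReal_mul hA0.le,
      ENNReal.ofReal_prod_of_nonneg (f := fun j : Fin s => B (j:ℕ)) (fun (j : Fin s) _ => (hB0 (j:ℕ)).le)]
    exact mul_le_mul_right (Finset.prod_le_prod' fun j _ => hfac j) _
  have hPA0 : 0 ≤ A * ∏ j : Fin s, B (j:ℕ) :=
    mul_nonneg hA0.le (Finset.prod_nonneg fun j _ => (hB0 _).le)
  have htoReal : (nInfo ω a b m s ε).toReal ≤ A * ∏ j : Fin s, B (j:ℕ) :=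
    ENNReal.toReal_le_of_le_ofReal hPA0 hn2
  have hfin : nInfo ω a b m s ε ≠ ∞ := ne_top_of_le_ne_top ENNReal.ofReal_ne_top hn2
  have hge1' : (1:ℝ≥0∞) ≤ nInfo ω a b m s ε := by
    have hterm0 : (if (∑ j : Fin s, a j * (((fun _ : Fin s => 0) j : ℕ) : ℝ) ^ (b j)) < X ω ε then
        ∏ j : Fin s, (m ((fun _ : Fin s => 0) j) : ℝ≥0∞) else 0) = 1 := by
      rw [if_pos]
      · simp [hm0]
      · have : ∀ j : Fin s, a (j:ℕ) * (((0:ℕ):ℝ) ^ (b (j:ℕ))) = 0 := by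
          intro j
          rw [Nat.cast_zero, Real.zero_rpow (hbj0 (j:ℕ)), mul_zero]
        simp only [this, Finset.sum_const_zero]
        exact hx
    calc (1:ℝ≥0∞) = _ := hterm0.symm
      _ ≤ nInfo ω a b m s ε := ENNReal.le_tsum (fun _ : Fin s => 0)
  have htR1 : 1 ≤ (nInfo ω a b m s ε).toReal := by
    have h := ENNReal.toReal_mono hfin hge1'
    simpa using h
  have hlog1 : Real.log ((nInfo ω a b m s ε).toReal) ≤ Real.log (A * ∏ j : Fin s, B (j:ℕ)) :=
    Real.log_le_log (by linarith) htoReal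
  have hprodne : (∏ j : Fin s, B (j:ℕ)) ≠ 0 := (Finset.prod_pos fun j _ => hB0 _).ne'
  have hlog2 : Real.log (A * ∏ j : Fin s, B (j:ℕ))
      = η * (2 * Real.log ε⁻¹) + ∑ j : Fin s, Real.log (B (j:ℕ)) := by
    rw [Real.log_mul hA0.ne' hprodne, hAdef, Real.log_exp]
    congr 1
    exact Real.log_prod (fun (j : Fin s) _ => (hB0 (j:ℕ)).ne')
  have hlog3 : (∑ j : Fin s, Real.log (B (j:ℕ)))
      ≤ ∑ j : Fin s, ((mmax:ℝ) * S) * ω ^ (η * a (j:ℕ)) := by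
    refine Finset.sum_le_sum fun j _ => ?_
    have h := Real.log_le_sub_one_of_pos (hB0 (j:ℕ))
    rw [hBdef] at h
    simpa using h
  have hsum : (∑ j : Fin s, ((mmax:ℝ) * S) * ω ^ (η * a (j:ℕ)))
      = ((mmax:ℝ) * S) * ∑ j ∈ Finset.range s, ω ^ (η * a j) := by
    rw [← Finset.mul_sum]
    congr 1
    exact Fin.sum_univ_eq_sum_range (fun j => ω ^ (η * a j)) s
  linarith

/-- Sum-exponential bound: if `m_0 = 1` then for any `η > 0`,
`log n(ε,APP_s) ≤ 2η log ε⁻¹ + C_η ∑_{j=1}^s ω^{η a_j}` with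
`C_η = m_max ∑_{k≥1} ω^{η a_1 (k^{b₀}-1)} < ∞`; consequently, if `a_j → ∞`
then EC-weak tractability holds. -/
theorem stmt17 (ω : ℝ) (hω : ω ∈ Set.Ioo (0:ℝ) 1)
    (a b : ℕ → ℝ) (ha : ∀ j, 0 < a j) (hamono : Monotone a)
    (b₀ : ℝ) (hb₀ : 0 < b₀) (hb : ∀ j, b₀ ≤ b j)
    (m : ℕ → ℕ) (hm : ∀ k, 1 ≤ m k) (mmax : ℕ) (hmmax : ∀ k, m k ≤ mmax)
    (hm0 : m 0 = 1) (η : ℝ) (hη : 0 < η) :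
    Summable (fun k : ℕ => ω ^ (η * a 0 * (((k : ℝ) + 1) ^ b₀ - 1))) ∧
    (∀ s : ℕ, 1 ≤ s → ∀ ε ∈ Set.Ioo (0:ℝ) 1,
      Real.log ((nInfo ω a b m s ε).toReal)
        ≤ 2 * η * Real.log ε⁻¹ +
          ((mmax : ℝ) * ∑' k : ℕ, ω ^ (η * a 0 * (((k : ℝ) + 1) ^ b₀ - 1))) *
            ∑ j ∈ Finset.range s, ω ^ (η * a j)) ∧
    (Filter.Tendsto a Filter.atTop Filter.atTop →
      ∀ δ : ℝ, 0 < δ → ∃ T : ℝ, ∀ s : ℕ, 1 ≤ s → ∀ ε ∈ Set.Ioo (0:ℝ) 1,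
        T ≤ (s : ℝ) + ε⁻¹ →
          Real.log ((nInfo ω a b m s ε).toReal) / ((s : ℝ) + Real.log ε⁻¹) < δ) := by
  obtain ⟨hω0, hω1⟩ := hω
  refine ⟨stmt17_summ ω ⟨hω0, hω1⟩ (η * a 0) (mul_pos hη (ha 0)) b₀ hb₀,
    fun s _ ε hε => stmt17_bound ω ⟨hω0, hω1⟩ a b ha hamono b₀ hb₀ hb m hm mmax hmmax hm0 η hη s ε hε,
    ?_⟩
  intro hA δ hδ
  set η' : ℝ := δ/4 with hη'def
  have hη' : 0 < η' := by positivity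
  set S' : ℝ := ∑' k : ℕ, ω ^ (η' * a 0 * (((k : ℝ) + 1) ^ b₀ - 1)) with hS'def
  have hS'0 : 0 ≤ S' := tsum_nonneg fun k => Real.rpow_nonneg hω0.le _
  set C : ℝ := (mmax:ℝ) * S' with hCdef
  have hC0 : 0 ≤ C := mul_nonneg (Nat.cast_nonneg _) hS'0
  have hL : Real.log ω < 0 := Real.log_neg hω0 hω1
  -- `C * ω ^ (η' * a j)` tends to 0
  have htend : Filter.Tendsto (fun j => C * ω ^ (η' * a j)) Filter.atTop (nhds 0) := by
    have h1 : Filter.Tendsto (fun j => η' * a j) Filter.atTop Filter.atTop :=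
      Filter.Tendsto.const_mul_atTop hη' hA
    have h2 : Filter.Tendsto (fun j => Real.log ω * (η' * a j)) Filter.atTop Filter.atBot :=
      Filter.Tendsto.const_mul_atTop_of_neg hL h1
    have h3 : Filter.Tendsto (fun j => Real.exp (Real.log ω * (η' * a j)))
        Filter.atTop (nhds 0) := Real.tendsto_exp_atBot.comp h2
    have h4 : Filter.Tendsto (fun j => ω ^ (η' * a j)) Filter.atTop (nhds 0) := by
      refine h3.congr fun j => ?_
      rw [Real.rpow_def_of_pos hω0]
    simpa using h4.const_mul C
  obtain ⟨N, hN⟩ := Filter.eventually_atTop.mp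
    (htend.eventually_lt_const (show (0:ℝ) < δ/8 by positivity))
  set M : ℝ := max 1 (8 * C * (N:ℝ) / δ) with hMdef
  refine ⟨M + Real.exp M, ?_⟩
  intro s hs ε hε hT
  obtain ⟨hε0, hε1⟩ := hε
  have hεi : 1 < ε⁻¹ := (one_lt_inv₀ hε0).mpr hε1
  have hLε : 0 < Real.log ε⁻¹ := Real.log_pos hεi
  have hs1 : (1:ℝ) ≤ (s:ℝ) := by exact_mod_cast hs
  have hden : (0:ℝ) < (s:ℝ) + Real.log ε⁻¹ := by linarith
  -- `M ≤ s + log ε⁻¹`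
  have hM : M ≤ (s:ℝ) + Real.log ε⁻¹ := by
    by_contra h
    push_neg at h
    have hsM : (s:ℝ) < M := by linarith
    have hLεM : Real.log ε⁻¹ < M := by linarith
    have hexp : ε⁻¹ < Real.exp M := by
      have : ε⁻¹ = Real.exp (Real.log ε⁻¹) := (Real.exp_log (by positivity)).symm
      rw [this]
      exact Real.exp_lt_exp.mpr hLεM
    linarith
  -- the bound with η'
  have hbd := stmt17_bound ω ⟨hω0, hω1⟩ a b ha hamono b₀ hb₀ hb m hm mmax hmmax hm0 η' hη'
    s ε ⟨hε0, hε1⟩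
  rw [← hS'def, ← hCdef] at hbd
  -- bound the sum
  have hterm : ∀ j : ℕ, C * ω ^ (η' * a j) ≤ (if j < N then C else 0) + δ/8 := by
    intro j
    by_cases hj : j < N
    · rw [if_pos hj]
      have h1 : ω ^ (η' * a j) ≤ 1 :=
        Real.rpow_le_one hω0.le hω1.le (mul_nonneg hη'.le (ha j).le)
      nlinarith
    · rw [if_neg hj]
      have := (hN j (le_of_not_gt hj)).le
      linarith
  have hsum1 : C * ∑ j ∈ Finset.range s, ω ^ (η' * a j) ≤ C * (N:ℝ) + (s:ℝ) * (δ/8) := by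
    rw [Finset.mul_sum]
    calc (∑ j ∈ Finset.range s, C * ω ^ (η' * a j))
        ≤ ∑ j ∈ Finset.range s, ((if j < N then C else 0) + δ/8) :=
          Finset.sum_le_sum fun j _ => hterm j
      _ = (∑ j ∈ Finset.range s, (if j < N then C else 0)) + (s:ℝ) * (δ/8) := by
          rw [Finset.sum_add_distrib, Finset.sum_const, Finset.card_range, nsmul_eq_mul]
      _ ≤ C * (N:ℝ) + (s:ℝ) * (δ/8) := by
          have h1 : (∑ j ∈ Finset.range s, (if j < N then C else 0))
              = ∑ j ∈ (Finset.range s).filter (fun j => j < N), C :=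
            (Finset.sum_filter _ _).symm
          have h2 : ((Finset.range s).filter (fun j => j < N)).card ≤ N := by
            refine le_trans (Finset.card_le_card ?_) (le_of_eq (Finset.card_range N))
            intro x hx
            simp only [Finset.mem_filter, Finset.mem_range] at hx ⊢
            exact hx.2
          rw [h1, Finset.sum_const, nsmul_eq_mul]
          have : (((Finset.range s).filter (fun j => j < N)).card : ℝ) ≤ (N:ℝ) := by
            exact_mod_cast h2
          nlinarith
  have hbd2 : Real.log ((nInfo ω a b m s ε).toReal)
      ≤ 2 * η' * Real.log ε⁻¹ + (C * (N:ℝ) + (s:ℝ) * (δ/8)) := by linarith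
  rw [div_lt_iff₀ hden]
  -- arithmetic finish
  have h8 : 8 * C * (N:ℝ) ≤ δ * ((s:ℝ) + Real.log ε⁻¹) := by
    have h1 : 8 * C * (N:ℝ) / δ ≤ M := le_max_right _ _
    have h2 : 8 * C * (N:ℝ) / δ ≤ (s:ℝ) + Real.log ε⁻¹ := h1.trans hM
    calc 8 * C * (N:ℝ) = (8 * C * (N:ℝ) / δ) * δ := by field_simp
      _ ≤ ((s:ℝ) + Real.log ε⁻¹) * δ := mul_le_mul_of_nonneg_right h2 hδ.le
      _ = δ * ((s:ℝ) + Real.log ε⁻¹) := by ring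
  have hp1 : 0 < δ * Real.log ε⁻¹ := mul_pos hδ hLε
  have hp2 : δ ≤ δ * (s:ℝ) := le_mul_of_one_le_right hδ.le hs1
  have hη'e : η' = δ/4 := hη'def
  nlinarith [hbd2, h8, hp1, hp2, hδ]
end

section
/- Zeta-function product bound: for any τ > 0, Π_{j=1}^s (m_0 + m_1 ω^{τ a_j}) ≤ Σ_{k=1}^∞ λ_{s,k}^τ = Π_{j=1}^s (m_0 + Σ_{k=1}^∞ m_k ω^{τ a_j k^{b_j}}) ≤ Π_{j=1}^s (m_0 + C_τ ω^{τ a_j}), where C_τ = m_max Σ_{k=1}^∞ ω^{τ a_1 (k^{b_0} - 1)} < ∞ and b_0 = inf_j b_j > 0. -/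
open scoped ENNReal
open Real Filter Asymptotics

lemma summable_exp_neg_C_rpow {C p : ℝ} (hC : 0 < C) (hp : 0 < p) :
    Summable (fun n : ℕ => Real.exp (-(C * (n:ℝ) ^ p))) := by
  have h2 : Filter.Tendsto (fun x : ℝ => (x ^ p) ^ (2/p) * Real.exp (-C * x ^ p))
      atTop (nhds 0) :=
    (tendsto_rpow_mul_exp_neg_mul_atTop_nhds_zero (2/p) C hC).comp (tendsto_rpow_atTop hp)
  have h3 : Filter.Tendsto (fun n : ℕ => (n:ℝ) ^ (2:ℝ) * Real.exp (-(C * (n:ℝ) ^ p)))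
      atTop (nhds 0) := by
    have := h2.comp tendsto_natCast_atTop_atTop (α := ℕ)
    refine this.congr' ?_
    filter_upwards [eventually_gt_atTop 0] with n hn
    have hn0 : (0:ℝ) ≤ (n:ℝ) := Nat.cast_nonneg n
    simp only [Function.comp]
    rw [← Real.rpow_mul hn0 p (2/p), neg_mul]
    congr 2
    field_simp
  have hsum : Summable (fun n : ℕ => ((n:ℝ) ^ (2:ℝ))⁻¹) :=
    (Real.summable_nat_rpow_inv).2 one_lt_two
  refine summable_of_isBigO_nat hsum ?_
  have hb : (fun n : ℕ => (n:ℝ) ^ (2:ℝ) * Real.exp (-(C * (n:ℝ) ^ p))) =O[atTop]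
      (fun _ : ℕ => (1:ℝ)) := h3.isBigO_one ℝ
  have h4 := hb.mul (isBigO_refl (fun n : ℕ => ((n:ℝ) ^ (2:ℝ))⁻¹) atTop)
  refine IsBigO.congr' (h4.trans (by simpa using isBigO_refl (fun n : ℕ => ((n:ℝ)^(2:ℝ))⁻¹) atTop)) ?_ (Eventually.of_forall fun n => rfl)
  filter_upwards [eventually_gt_atTop 0] with n hn
  have h5 : ((n:ℝ) ^ (2:ℝ)) ≠ 0 := by positivity
  field_simp

lemma tsum_pi_fin_prod : ∀ (s : ℕ) (G : Fin s → ℕ → ℝ≥0∞),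
    (∑' k : Fin s → ℕ, ∏ j : Fin s, G j (k j)) = ∏ j : Fin s, ∑' n : ℕ, G j n := by
  intro s
  induction s with
  | zero =>
    intro G
    simp only [Finset.univ_eq_empty, Finset.prod_empty]
    exact tsum_eq_single (fun x => x.elim0) (fun b' hb => absurd (Subsingleton.elim b' _) hb)
  | succ s ih =>
    intro G
    rw [← (Fin.consEquiv (fun _ : Fin (s+1) => ℕ)).tsum_eq]
    have h1 : ∀ p : ℕ × (Fin s → ℕ),
        (∏ j : Fin (s+1), G j ((Fin.consEquiv (fun _ : Fin (s+1) => ℕ)) p j))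
          = G 0 p.1 * ∏ j : Fin s, G j.succ (p.2 j) := by
      intro p
      rw [Fin.prod_univ_succ]
      simp [Fin.consEquiv]
    simp_rw [h1]
    have h2 := ENNReal.tsum_prod
      (f := fun (a : ℕ) (c : Fin s → ℕ) => G 0 a * ∏ j : Fin s, G j.succ (c j))
    rw [h2]
    simp_rw [ENNReal.tsum_mul_left]
    rw [ENNReal.tsum_mul_right, ih (fun j => G j.succ), Fin.prod_univ_succ]


/-- `∑_k λ_{s,k}^τ = ∑_{k ∈ ℕ₀^s} ∏_j m_{k_j} ω^{τ a_j k_j^{b_j}}` (in `ℝ≥0∞`). -/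
noncomputable def zetaSum (ω : ℝ) (a b : ℕ → ℝ) (m : ℕ → ℕ) (τ : ℝ) (s : ℕ) : ℝ≥0∞ :=
  ∑' k : Fin s → ℕ,
    ∏ j : Fin s, ((m (k j) : ℝ≥0∞) * ENNReal.ofReal (ω ^ (τ * a j * ((k j : ℝ) ^ (b j)))))

/-- Zeta-function product bound: for any `τ > 0`,
`∏_j (m_0 + m_1 ω^{τ a_j}) ≤ ∑_k λ_{s,k}^τ = ∏_j (m_0 + ∑_{k≥1} m_k ω^{τ a_j k^{b_j}})
≤ ∏_j (m_0 + C_τ ω^{τ a_j})` with `C_τ = m_max ∑_{k≥1} ω^{τ a_1 (k^{b₀}-1)} < ∞`. -/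
theorem stmt18 (ω : ℝ) (hω : ω ∈ Set.Ioo (0:ℝ) 1)
    (a b : ℕ → ℝ) (ha : ∀ j, 0 < a j) (hamono : Monotone a)
    (b₀ : ℝ) (hb₀ : 0 < b₀) (hb : ∀ j, b₀ ≤ b j)
    (m : ℕ → ℕ) (hm : ∀ k, 1 ≤ m k)
    (mmax : ℕ) (hmmax : ∀ k, 1 ≤ k → m k ≤ mmax) (hmmax' : ∃ k, 1 ≤ k ∧ m k = mmax)
    (τ : ℝ) (hτ : 0 < τ) (s : ℕ) :
    ((mmax : ℝ≥0∞) * ∑' k : ℕ, ENNReal.ofReal (ω ^ (τ * a 0 * (((k : ℝ) + 1) ^ b₀ - 1))) < ⊤) ∧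
    (∏ j ∈ Finset.range s,
        ((m 0 : ℝ≥0∞) + (m 1 : ℝ≥0∞) * ENNReal.ofReal (ω ^ (τ * a j)))
      ≤ zetaSum ω a b m τ s) ∧
    (zetaSum ω a b m τ s
      = ∏ j ∈ Finset.range s,
          ((m 0 : ℝ≥0∞) + ∑' k : ℕ,
            (m (k + 1) : ℝ≥0∞) * ENNReal.ofReal (ω ^ (τ * a j * (((k : ℝ) + 1) ^ (b j)))))) ∧
    (zetaSum ω a b m τ s
      ≤ ∏ j ∈ Finset.range s,
          ((m 0 : ℝ≥0∞) +
            ((mmax : ℝ≥0∞) *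
              ∑' k : ℕ, ENNReal.ofReal (ω ^ (τ * a 0 * (((k : ℝ) + 1) ^ b₀ - 1)))) *
              ENNReal.ofReal (ω ^ (τ * a j)))) := by
  obtain ⟨hω0, hω1⟩ := hω
  -- the per-coordinate factor
  set G : ℕ → ℕ → ℝ≥0∞ := fun j k =>
    (m k : ℝ≥0∞) * ENNReal.ofReal (ω ^ (τ * a j * ((k : ℝ) ^ (b j)))) with hG
  -- factorization of zetaSum
  have hfact : zetaSum ω a b m τ s = ∏ j ∈ Finset.range s, ∑' n : ℕ, G j n := by
    rw [zetaSum, tsum_pi_fin_prod s (fun j => G (j : ℕ))]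
    exact Fin.prod_univ_eq_prod_range (fun j => ∑' n : ℕ, G j n) s
  -- splitting off the k = 0 term
  have hsplit : ∀ j : ℕ, (∑' n : ℕ, G j n)
      = (m 0 : ℝ≥0∞) + ∑' k : ℕ,
          (m (k + 1) : ℝ≥0∞) * ENNReal.ofReal (ω ^ (τ * a j * (((k : ℝ) + 1) ^ (b j)))) := by
    intro j
    rw [tsum_eq_zero_add' ENNReal.summable]
    congr 1
    · simp only [hG, Nat.cast_zero]
      rw [Real.zero_rpow ((lt_of_lt_of_le hb₀ (hb j)).ne'), mul_zero, Real.rpow_zero,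
        ENNReal.ofReal_one, mul_one]
    · refine tsum_congr fun k => ?_
      simp only [hG]
      push_cast
      ring_nf
  -- the equality part
  have heq : zetaSum ω a b m τ s
      = ∏ j ∈ Finset.range s,
          ((m 0 : ℝ≥0∞) + ∑' k : ℕ,
            (m (k + 1) : ℝ≥0∞) * ENNReal.ofReal (ω ^ (τ * a j * (((k : ℝ) + 1) ^ (b j))))) := by
    rw [hfact]; exact Finset.prod_congr rfl fun j _ => hsplit j
  -- Part 1 : finiteness
  have hC : 0 < τ * a 0 * (-Real.log ω) :=
    mul_pos (mul_pos hτ (ha 0)) (neg_pos.2 (Real.log_neg hω0 hω1))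
  have hfeq : ∀ k : ℕ, ω ^ (τ * a 0 * (((k:ℝ)+1) ^ b₀ - 1))
      = Real.exp (τ * a 0 * (-Real.log ω)) *
        Real.exp (-((τ * a 0 * (-Real.log ω)) * ((k:ℝ)+1) ^ b₀)) := by
    intro k
    rw [Real.rpow_def_of_pos hω0, ← Real.exp_add]
    congr 1
    ring
  have hsum1 : Summable (fun k : ℕ =>
      Real.exp (τ * a 0 * (-Real.log ω)) *
        Real.exp (-((τ * a 0 * (-Real.log ω)) * ((k:ℝ)+1) ^ b₀))) := by
    refine Summable.mul_left _ ?_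
    refine Summable.of_nonneg_of_le (fun k => (Real.exp_pos _).le) (fun k => ?_)
      (summable_exp_neg_C_rpow hC hb₀)
    refine Real.exp_le_exp.2 (neg_le_neg (mul_le_mul_of_nonneg_left ?_ hC.le))
    exact Real.rpow_le_rpow (Nat.cast_nonneg k) (by linarith) hb₀.le
  have hS : (∑' k : ℕ, ENNReal.ofReal (ω ^ (τ * a 0 * (((k:ℝ)+1) ^ b₀ - 1)))) ≠ ⊤ := by
    have hnn : ∀ k : ℕ, 0 ≤ ω ^ (τ * a 0 * (((k:ℝ)+1) ^ b₀ - 1)) :=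
      fun k => (Real.rpow_pos_of_pos hω0 _).le
    have hsum : Summable (fun k : ℕ => ω ^ (τ * a 0 * (((k:ℝ)+1) ^ b₀ - 1))) :=
      hsum1.congr fun k => (hfeq k).symm
    rw [← ENNReal.ofReal_tsum_of_nonneg hnn hsum]
    exact ENNReal.ofReal_ne_top
  have part1 : (mmax : ℝ≥0∞) *
      (∑' k : ℕ, ENNReal.ofReal (ω ^ (τ * a 0 * (((k:ℝ)+1) ^ b₀ - 1)))) < ⊤ :=
    ENNReal.mul_lt_top (ENNReal.natCast_lt_top mmax) hS.lt_top
  -- Part 2 : lower bound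
  have part2 : ∏ j ∈ Finset.range s,
      ((m 0 : ℝ≥0∞) + (m 1 : ℝ≥0∞) * ENNReal.ofReal (ω ^ (τ * a j)))
      ≤ zetaSum ω a b m τ s := by
    rw [heq]
    refine Finset.prod_le_prod' fun j _ => ?_
    refine add_le_add_right ?_ _
    have h0 := ENNReal.le_tsum (f := fun k : ℕ =>
      (m (k+1) : ℝ≥0∞) * ENNReal.ofReal (ω ^ (τ * a j * (((k:ℝ)+1) ^ (b j))))) 0
    refine le_trans (le_of_eq ?_) h0
    norm_num [Real.one_rpow]
  -- Part 4 : upper bound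
  have part4 : zetaSum ω a b m τ s
      ≤ ∏ j ∈ Finset.range s,
          ((m 0 : ℝ≥0∞) +
            ((mmax : ℝ≥0∞) *
              ∑' k : ℕ, ENNReal.ofReal (ω ^ (τ * a 0 * (((k : ℝ) + 1) ^ b₀ - 1)))) *
              ENNReal.ofReal (ω ^ (τ * a j))) := by
    rw [heq]
    refine Finset.prod_le_prod' fun j _ => ?_
    refine add_le_add_right ?_ _
    have key : ∀ k : ℕ,
        (m (k+1) : ℝ≥0∞) * ENNReal.ofReal (ω ^ (τ * a j * (((k:ℝ)+1) ^ (b j))))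
        ≤ (mmax : ℝ≥0∞) * (ENNReal.ofReal (ω ^ (τ * a 0 * (((k:ℝ)+1) ^ b₀ - 1)))
            * ENNReal.ofReal (ω ^ (τ * a j))) := by
      intro k
      refine mul_le_mul' (Nat.cast_le.2 (hmmax (k+1) (Nat.le_add_left 1 k))) ?_
      rw [← ENNReal.ofReal_mul (Real.rpow_pos_of_pos hω0 _).le]
      refine ENNReal.ofReal_le_ofReal ?_
      have hx1 : (1:ℝ) ≤ (k:ℝ)+1 := by
        have := Nat.cast_nonneg (α := ℝ) k; linarith
      have hY0 : (0:ℝ) ≤ ((k:ℝ)+1) ^ b₀ - 1 := by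
        have : (1:ℝ) ≤ ((k:ℝ)+1) ^ b₀ := Real.one_le_rpow hx1 hb₀.le
        linarith
      have hXY : ((k:ℝ)+1) ^ b₀ ≤ ((k:ℝ)+1) ^ (b j) :=
        Real.rpow_le_rpow_of_exponent_le hx1 (hb j)
      have hexp : τ * a 0 * (((k:ℝ)+1) ^ b₀ - 1) ≤ τ * a j * (((k:ℝ)+1) ^ (b j) - 1) := by
        refine mul_le_mul (mul_le_mul_of_nonneg_left (hamono (Nat.zero_le j)) hτ.le)
          (by linarith) hY0 ?_
        have := ha j
        positivity
      calc ω ^ (τ * a j * (((k:ℝ)+1) ^ (b j)))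
          = ω ^ (τ * a j * (((k:ℝ)+1) ^ (b j) - 1)) * ω ^ (τ * a j) := by
            rw [← Real.rpow_add hω0]
            congr 1
            ring
        _ ≤ ω ^ (τ * a 0 * (((k:ℝ)+1) ^ b₀ - 1)) * ω ^ (τ * a j) :=
            mul_le_mul_of_nonneg_right
              (Real.rpow_le_rpow_of_exponent_ge hω0 hω1.le hexp)
              (Real.rpow_pos_of_pos hω0 _).le
    calc (∑' k : ℕ, (m (k+1) : ℝ≥0∞) * ENNReal.ofReal (ω ^ (τ * a j * (((k:ℝ)+1) ^ (b j)))))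
        ≤ ∑' k : ℕ, (mmax : ℝ≥0∞) *
            (ENNReal.ofReal (ω ^ (τ * a 0 * (((k:ℝ)+1) ^ b₀ - 1)))
              * ENNReal.ofReal (ω ^ (τ * a j))) := ENNReal.tsum_le_tsum key
      _ = ((mmax : ℝ≥0∞) *
            ∑' k : ℕ, ENNReal.ofReal (ω ^ (τ * a 0 * (((k:ℝ)+1) ^ b₀ - 1)))) *
            ENNReal.ofReal (ω ^ (τ * a j)) := by
          rw [ENNReal.tsum_mul_left, ENNReal.tsum_mul_right, mul_assoc]
  exact ⟨part1, part2, heq, part4⟩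
end
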